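/- arXiv:math/0702495 — 3 statements merged into one kernel-verified Lean document; each statement's English description precedes it below -/
import Mathlib

section
/- Every element of PL⁺(ℝ) can be written as a composite of four elements of PL⁺(ℝ), each of which is reversible in PL⁺(ℝ) (i.e., each is conjugated to its inverse by some element of PL⁺(ℝ)). In other words, PL⁺(ℝ) = R₄(PL⁺(ℝ)). -/
/-- `f` is a homeomorphism of `ℝ`: a bijection of `ℝ` that is continuous in both directions. -/
def IsHomeo (f : Equiv.Perm ℝ) : Prop := Continuous f ∧ Continuous f.symm

/-- `f` is locally affine at `x`: it agrees with an affine map on a neighbourhood of `x`. -/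
def IsLocallyAffineAt (f : ℝ → ℝ) (x : ℝ) : Prop :=
  ∃ a b : ℝ, ∀ᶠ y in nhds x, f y = a * y + b

/-- Membership in PLF(ℝ): a homeomorphism of `ℝ` that is locally affine at all but
finitely many points. -/
def InPLF (f : Equiv.Perm ℝ) : Prop :=
  IsHomeo f ∧ {x : ℝ | ¬ IsLocallyAffineAt (⇑f) x}.Finite

/-- Membership in PL(ℝ): a homeomorphism of `ℝ` whose set of points of non-local-affinity
has no accumulation point in `ℝ`. -/
def InPL (f : Equiv.Perm ℝ) : Prop :=
  IsHomeo f ∧ ∀ x : ℝ, ¬ AccPt x (Filter.principal {y : ℝ | ¬ IsLocallyAffineAt (⇑f) y})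

namespace PL4
open Filter Set Topology

abbrev Bad (f : ℝ → ℝ) : Set ℝ := {x | ¬ IsLocallyAffineAt f x}

def LocFin (f : ℝ → ℝ) : Prop := ∀ x : ℝ, ∃ U ∈ nhds x, (Bad f ∩ U).Finite

theorem la_congr {f g : ℝ → ℝ} {x : ℝ} (h : f =ᶠ[nhds x] g) :
    IsLocallyAffineAt f x ↔ IsLocallyAffineAt g x := by
  constructor <;> rintro ⟨a, b, hab⟩ <;> exact ⟨a, b, by filter_upwards [hab, h] with y h1 h2 <;>
    simp_all⟩

theorem locfin_iff {f : ℝ → ℝ} :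
    LocFin f ↔ ∀ x : ℝ, ¬ AccPt x (Filter.principal (Bad f)) := by
  constructor
  · intro h x hacc
    obtain ⟨U, hU, hfin⟩ := h x
    rw [accPt_iff_nhds] at hacc
    obtain ⟨y, ⟨hyU, hybad⟩, hyx⟩ := hacc ((U \ ((Bad f ∩ U) \ {x})) ∪ {x})
      (by
        have : IsClosed (((Bad f ∩ U) \ {x}) : Set ℝ) := (hfin.subset diff_subset).isClosed
        have hop : IsOpen (((Bad f ∩ U) \ {x}) : Set ℝ)ᶜ := this.isOpen_compl
        have hxmem : x ∈ (((Bad f ∩ U) \ {x}) : Set ℝ)ᶜ := by simp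
        filter_upwards [hU, hop.mem_nhds hxmem] with z h1 h2
        exact Or.inl ⟨h1, h2⟩)
    rcases hyU with h1 | h1
    · exact h1.2 ⟨⟨hybad, h1.1⟩, hyx⟩
    · exact hyx h1
  · intro h x
    have := h x
    rw [accPt_iff_nhds] at this
    push_neg at this
    obtain ⟨U, hU, hall⟩ := this
    refine ⟨U, hU, (Set.finite_singleton x).subset ?_⟩
    rintro y ⟨hy1, hy2⟩
    exact hall y ⟨hy2, hy1⟩

/-- Make a permutation of ℝ from a strictly monotone surjective function. -/
noncomputable def mkPerm (φ : ℝ → ℝ) (hm : StrictMono φ) (hs : Function.Surjective φ) :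
    Equiv.Perm ℝ := (StrictMono.orderIsoOfSurjective φ hm hs).toEquiv

@[simp] theorem mkPerm_apply (φ : ℝ → ℝ) (hm : StrictMono φ) (hs : Function.Surjective φ) :
    ⇑(mkPerm φ hm hs) = φ := rfl

theorem isHomeo_of_strictMono (P : Equiv.Perm ℝ) (h : StrictMono ⇑P) : IsHomeo P := by
  have hs : Function.Surjective ⇑P := P.surjective
  let oi := StrictMono.orderIsoOfSurjective ⇑P h hs
  have h1 : Continuous ⇑P := by
    have := oi.toHomeomorph.continuous
    simpa [oi] using this
  have h2 : Continuous ⇑P.symm := by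
    have := oi.toHomeomorph.symm.continuous
    have he : ⇑oi.toHomeomorph.symm = ⇑P.symm := by
      funext y
      apply P.injective
      simp only [Equiv.apply_symm_apply]
      exact oi.apply_symm_apply y
    rwa [he] at this
  exact ⟨h1, h2⟩

theorem inPL_of (P : Equiv.Perm ℝ) (h : StrictMono ⇑P) (hl : LocFin ⇑P) : InPL P :=
  ⟨isHomeo_of_strictMono P h, locfin_iff.mp hl⟩

theorem locfin_of_inPL {P : Equiv.Perm ℝ} (h : InPL P) : LocFin ⇑P :=
  locfin_iff.mpr h.2


theorem sm_mul {P Q : Equiv.Perm ℝ} (hP : StrictMono ⇑P) (hQ : StrictMono ⇑Q) :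
    StrictMono ⇑(P * Q) := by
  have : ⇑(P * Q) = ⇑P ∘ ⇑Q := rfl
  rw [this]; exact hP.comp hQ

theorem sm_inv {P : Equiv.Perm ℝ} (hP : StrictMono ⇑P) : StrictMono ⇑(P⁻¹) := by
  intro x y hxy
  have h := hP.lt_iff_lt (a := P⁻¹ x) (b := P⁻¹ y)
  rw [← h]
  have h1 : P (P⁻¹ x) = x := P.apply_symm_apply x
  have h2 : P (P⁻¹ y) = y := P.apply_symm_apply y
  rw [h1, h2]; exact hxy

-- local affinity at a point for composition
theorem la_comp {f g : ℝ → ℝ} {x : ℝ} (hf : IsLocallyAffineAt f x)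
    (hg : IsLocallyAffineAt g (f x)) : IsLocallyAffineAt (g ∘ f) x := by
  obtain ⟨a, b, hab⟩ := hf
  obtain ⟨c, d, hcd⟩ := hg
  refine ⟨c * a, c * b + d, ?_⟩
  have hcf : ContinuousAt f x := by
    have hca : ContinuousAt (fun y => a * y + b) x := by fun_prop
    apply hca.congr
    filter_upwards [hab] with y hy
    exact hy.symm
  have h2 : ∀ᶠ y in nhds x, g (f y) = c * f y + d := hcf.eventually hcd
  filter_upwards [hab, h2] with y h1 h2
  rw [Function.comp_apply, h2, h1]; ring

theorem bad_comp (f g : ℝ → ℝ) : Bad (g ∘ f) ⊆ Bad f ∪ f ⁻¹' (Bad g) := by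
  intro x hx
  by_contra hc
  simp only [Set.mem_union, Set.mem_preimage] at hc
  push_neg at hc
  obtain ⟨h1, h2⟩ := hc
  simp only [Bad, Set.mem_setOf_eq, not_not] at h1 h2 hx
  exact hx (la_comp h1 h2)

theorem locfin_comp {f g : ℝ → ℝ} (hf : LocFin f) (hg : LocFin g)
    (hfc : Continuous f) (hfi : Function.Injective f) : LocFin (g ∘ f) := by
  intro x
  obtain ⟨U, hU, hUf⟩ := hf x
  obtain ⟨V, hV, hVf⟩ := hg (f x)
  refine ⟨U ∩ f ⁻¹' V, Filter.inter_mem hU (hfc.continuousAt.preimage_mem_nhds hV), ?_⟩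
  have : Bad (g ∘ f) ∩ (U ∩ f ⁻¹' V) ⊆ (Bad f ∩ U) ∪ f ⁻¹' (Bad g ∩ V) := by
    rintro y ⟨hy1, hy2, hy3⟩
    rcases bad_comp f g hy1 with h | h
    · exact Or.inl ⟨h, hy2⟩
    · exact Or.inr ⟨h, hy3⟩
  exact ((hUf.union (hVf.preimage (hfi.injOn))).subset this)

theorem la_inv {P : Equiv.Perm ℝ} (hm : StrictMono ⇑P) (hc : Continuous ⇑P.symm) {x : ℝ}
    (h : IsLocallyAffineAt ⇑P x) : IsLocallyAffineAt ⇑P⁻¹ (P x) := by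
  obtain ⟨a, b, hab⟩ := h
  -- a > 0
  obtain ⟨U, hU, hUo, hxU⟩ := eventually_nhds_iff.mp hab
  obtain ⟨ε, hε, hball⟩ := Metric.isOpen_iff.mp hUo x hxU
  have hx2 : x + ε / 2 ∈ U := by
    apply hball
    simp only [Metric.mem_ball, Real.dist_eq]
    rw [abs_of_pos (by linarith)]
    linarith
  have ha : 0 < a := by
    have h1 : P x < P (x + ε / 2) := hm (by linarith)
    rw [hU x hxU, hU _ hx2] at h1
    nlinarith
  refine ⟨1 / a, -b / a, ?_⟩
  have hcont : ContinuousAt (⇑P.symm) (P x) := hc.continuousAt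
  have hev : ∀ᶠ z in nhds (P x), P.symm z ∈ U := by
    have hx' : P.symm (P x) = x := P.symm_apply_apply x
    exact hcont.eventually_mem (hUo.mem_nhds (by rw [hx']; exact hxU))
  filter_upwards [hev] with z hz
  have h1 : P (P.symm z) = z := P.apply_symm_apply z
  have h2 : P (P.symm z) = a * (P.symm z) + b := hU _ hz
  have : (P⁻¹ : Equiv.Perm ℝ) z = P.symm z := rfl
  rw [this]
  field_simp
  nlinarith [h1, h2]

theorem locfin_inv {P : Equiv.Perm ℝ} (hm : StrictMono ⇑P) (hc : Continuous ⇑P.symm)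
    (hf : LocFin ⇑P) : LocFin ⇑P⁻¹ := by
  intro y
  obtain ⟨U, hU, hUf⟩ := hf (P.symm y)
  refine ⟨⇑P.symm ⁻¹' U, hc.continuousAt.preimage_mem_nhds (by simpa using hU), ?_⟩
  have hsub : Bad ⇑P⁻¹ ∩ ⇑P.symm ⁻¹' U ⊆ ⇑P '' (Bad ⇑P ∩ U) := by
    rintro z ⟨hz1, hz2⟩
    refine ⟨P.symm z, ⟨?_, hz2⟩, P.apply_symm_apply z⟩
    by_contra hbad
    simp only [Bad, Set.mem_setOf_eq, not_not] at hbad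
    have := la_inv hm hc hbad
    rw [P.apply_symm_apply] at this
    exact hz1 this
  exact (hUf.image _).subset hsub


/-- The bundled "good" predicate: an increasing PL homeomorphism. -/
def Good (P : Equiv.Perm ℝ) : Prop := StrictMono ⇑P ∧ LocFin ⇑P

theorem Good.inPL {P : Equiv.Perm ℝ} (h : Good P) : InPL P := inPL_of P h.1 h.2

theorem Good.mono {P : Equiv.Perm ℝ} (h : Good P) : StrictMono ⇑P := h.1

theorem good_one : Good (1 : Equiv.Perm ℝ) := by
  constructor
  · intro x y h; simpa using h
  · intro x
    refine ⟨Set.univ, Filter.univ_mem, Set.Finite.subset (Set.finite_empty) ?_⟩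
    rintro y ⟨hy, -⟩
    exact absurd ⟨1, 0, by filter_upwards with z; simp⟩ hy

theorem Good.mul {P Q : Equiv.Perm ℝ} (hP : Good P) (hQ : Good Q) : Good (P * Q) := by
  refine ⟨sm_mul hP.1 hQ.1, ?_⟩
  have hQc : Continuous ⇑Q := (isHomeo_of_strictMono Q hQ.1).1
  have : ⇑(P * Q) = ⇑P ∘ ⇑Q := rfl
  rw [this]
  exact locfin_comp hQ.2 hP.2 hQc Q.injective

theorem Good.inv {P : Equiv.Perm ℝ} (hP : Good P) : Good P⁻¹ :=
  ⟨sm_inv hP.1, locfin_inv hP.1 (isHomeo_of_strictMono P hP.1).2 hP.2⟩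

theorem Good.zpow {P : Equiv.Perm ℝ} (hP : Good P) (n : ℤ) : Good (P ^ n) := by
  induction n using Int.induction_on with
  | zero => simpa using good_one
  | succ k ih => rw [zpow_add_one]; exact ih.mul hP
  | pred k ih => rw [zpow_sub_one]; exact ih.mul hP.inv


/-- A block of a partition of `ℝ` into intervals `[p n, p (n+1))`, `n : ℤ`. -/
theorem ex_block (p : ℤ → ℝ) (hbot : Tendsto p atBot atBot) (htop : Tendsto p atTop atTop)
    (x : ℝ) : ∃ n : ℤ, p n ≤ x ∧ x < p (n + 1) := by
  have hne : ∃ z : ℤ, p z ≤ x := (hbot.eventually_le_atBot x).exists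
  have hbd : ∃ b : ℤ, ∀ z : ℤ, p z ≤ x → z ≤ b := by
    obtain ⟨N, hN⟩ := (htop.eventually_gt_atTop x).exists_forall_of_atTop
    exact ⟨N, fun z hz => by
      by_contra hc
      push_neg at hc
      exact absurd hz (not_le.mpr (hN z hc.le))⟩
  obtain ⟨n, hn, hmax⟩ := Int.exists_greatest_of_bdd hbd hne
  refine ⟨n, hn, ?_⟩
  by_contra hc
  push_neg at hc
  exact absurd (hmax (n + 1) hc) (by omega)

theorem block_unique {p : ℤ → ℝ} (hp : StrictMono p) {n m : ℤ} {x : ℝ}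
    (h1 : p n ≤ x) (h2 : x < p (n + 1)) (h3 : p m ≤ x) (h4 : x < p (m + 1)) : n = m := by
  by_contra hc
  rcases lt_or_gt_of_ne hc with h | h
  · have : p (n + 1) ≤ p m := hp.monotone (by omega)
    linarith
  · have : p (m + 1) ≤ p n := hp.monotone (by omega)
    linarith

structure GlueData where
  p : ℤ → ℝ
  q : ℤ → ℝ
  G : ℤ → ℝ → ℝ
  hp : StrictMono p
  hq : StrictMono q
  hptop : Tendsto p atTop atTop
  hpbot : Tendsto p atBot atBot
  hqtop : Tendsto q atTop atTop
  hqbot : Tendsto q atBot atBot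
  hmono : ∀ n, StrictMonoOn (G n) (Set.Icc (p n) (p (n+1)))
  hl : ∀ n, G n (p n) = q n
  hr : ∀ n, G n (p (n+1)) = q (n+1)
  hsurj : ∀ n, Set.SurjOn (G n) (Set.Icc (p n) (p (n+1))) (Set.Icc (q n) (q (n+1)))
  hfin : ∀ n, (Bad (G n) ∩ Set.Ioo (p n) (p (n+1))).Finite

namespace GlueData

variable (D : GlueData)

noncomputable def idx (x : ℝ) : ℤ := (ex_block D.p D.hpbot D.hptop x).choose

theorem idx_spec (x : ℝ) : D.p (D.idx x) ≤ x ∧ x < D.p (D.idx x + 1) :=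
  (ex_block D.p D.hpbot D.hptop x).choose_spec

noncomputable def fn : ℝ → ℝ := fun x => D.G (D.idx x) x

theorem fn_eq {n : ℤ} {x : ℝ} (h1 : D.p n ≤ x) (h2 : x < D.p (n + 1)) : D.fn x = D.G n x := by
  have hs := D.idx_spec x
  rw [fn, block_unique D.hp hs.1 hs.2 h1 h2]

theorem fn_mem {n : ℤ} {x : ℝ} (h1 : D.p n ≤ x) (h2 : x < D.p (n + 1)) :
    D.q n ≤ D.fn x ∧ D.fn x < D.q (n + 1) := by
  rw [D.fn_eq h1 h2]
  constructor
  · rw [← D.hl n]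
    exact (D.hmono n).monotoneOn (by constructor <;> [rfl; exact le_of_lt (lt_of_le_of_lt h1 h2)])
      ⟨h1, h2.le⟩ h1
  · rw [← D.hr n]
    exact (D.hmono n) ⟨h1, h2.le⟩ (by constructor <;> [exact (D.hp (by omega)).le; rfl]) h2

theorem fn_mono : StrictMono D.fn := by
  intro x y hxy
  obtain ⟨n, hn1, hn2⟩ := ex_block D.p D.hpbot D.hptop x
  obtain ⟨m, hm1, hm2⟩ := ex_block D.p D.hpbot D.hptop y
  rw [D.fn_eq hn1 hn2, D.fn_eq hm1 hm2]
  rcases lt_trichotomy n m with h | h | h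
  · have h1 : D.G n x < D.q (n + 1) := by
      rw [← D.hr n]
      exact (D.hmono n) ⟨hn1, hn2.le⟩ ⟨(D.hp (by omega)).le, le_refl _⟩ hn2
    have h2 : D.q (n + 1) ≤ D.q m := D.hq.monotone (by omega)
    have h3 : D.q m ≤ D.G m y := by
      rw [← D.hl m]
      exact (D.hmono m).monotoneOn ⟨le_refl _, (D.hp (by omega)).le⟩ ⟨hm1, hm2.le⟩ hm1
    linarith
  · subst h
    exact (D.hmono n) ⟨hn1, hn2.le⟩ ⟨hm1, hm2.le⟩ hxy
  · exfalso
    have : D.p (m + 1) ≤ D.p n := D.hp.monotone (by omega)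
    linarith

theorem fn_surj : Function.Surjective D.fn := by
  intro y
  obtain ⟨m, hm1, hm2⟩ := ex_block D.q D.hqbot D.hqtop y
  obtain ⟨x, hx, hgx⟩ := D.hsurj m ⟨hm1, hm2.le⟩
  have hxlt : x < D.p (m + 1) := by
    rcases hx.2.lt_or_eq with h | h
    · exact h
    · exfalso
      rw [h, D.hr m] at hgx
      exact absurd hgx.symm (ne_of_lt hm2)
  exact ⟨x, by rw [D.fn_eq hx.1 hxlt]; exact hgx⟩

theorem fn_locfin : LocFin D.fn := by
  intro x
  obtain ⟨n, hn1, hn2⟩ := ex_block D.p D.hpbot D.hptop x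
  refine ⟨Set.Ioo (D.p (n - 1)) (D.p (n + 2)), ?_, ?_⟩
  · apply Ioo_mem_nhds
    · exact lt_of_lt_of_le (D.hp (by omega)) hn1
    · exact lt_trans hn2 (D.hp (by omega))
  · have hsub : Bad D.fn ∩ Set.Ioo (D.p (n - 1)) (D.p (n + 2)) ⊆
        ({D.p n, D.p (n + 1)} : Set ℝ) ∪
        (Bad (D.G (n-1)) ∩ Set.Ioo (D.p (n-1)) (D.p n)) ∪
        (Bad (D.G n) ∩ Set.Ioo (D.p n) (D.p (n+1))) ∪
        (Bad (D.G (n+1)) ∩ Set.Ioo (D.p (n+1)) (D.p (n+2))) := by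
      rintro y ⟨hyb, hy1, hy2⟩
      obtain ⟨m, hm1, hm2⟩ := ex_block D.p D.hpbot D.hptop y
      have hmn : n - 1 ≤ m := by
        by_contra hc
        push_neg at hc
        have : D.p (m + 1) ≤ D.p (n - 1) := D.hp.monotone (by omega)
        linarith
      have hmn2 : m ≤ n + 1 := by
        by_contra hc
        push_neg at hc
        have : D.p (n + 2) ≤ D.p m := D.hp.monotone (by omega)
        linarith
      rcases hm1.lt_or_eq with hint | heq
      · -- interior of block m
        have hev : D.fn =ᶠ[nhds y] D.G m := by
          rw [eventuallyEq_iff_exists_mem]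
          exact ⟨Set.Ioo (D.p m) (D.p (m+1)), Ioo_mem_nhds hint hm2,
            fun z hz => D.fn_eq hz.1.le hz.2⟩
        have hbm : y ∈ Bad (D.G m) := by
          simp only [Bad, Set.mem_setOf_eq] at hyb ⊢
          rw [← la_congr hev]
          exact hyb
        have : m = n - 1 ∨ m = n ∨ m = n + 1 := by omega
        rcases this with h | h | h
        · subst h
          exact Or.inl (Or.inl (Or.inr ⟨hbm, hint, by simpa using hm2⟩))
        · subst h
          exact Or.inl (Or.inr ⟨hbm, hint, hm2⟩)
        · subst h
          exact Or.inr ⟨hbm, hint, by rw [show n + 2 = n + 1 + 1 by ring]; exact hm2⟩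
      · -- y is a node p m with p (n-1) < y: so m = n or n + 1
        have : m = n ∨ m = n + 1 := by
          rcases (by omega : m = n - 1 ∨ m = n ∨ m = n + 1) with h | h | h
          · exfalso
            rw [← heq] at hy1
            exact absurd (hy1.trans_le hm1) (by rw [← h, ← heq]; simp)
          · exact Or.inl h
          · exact Or.inr h
        rcases this with h | h
        · exact Or.inl (Or.inl (Or.inl (by left; rw [← heq, h])))
        · exact Or.inl (Or.inl (Or.inl (by right; rw [← heq, h]; rfl)))
    refine Set.Finite.subset ?_ hsub
    have f1 := D.hfin (n-1)
    have f3 := D.hfin (n+1)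
    rw [show n - 1 + 1 = n by ring] at f1
    rw [show n + 1 + 1 = n + 2 by ring] at f3
    exact (((((Set.finite_singleton _).insert _).union f1).union (D.hfin n)).union f3)

end GlueData

theorem la_affine {a b x : ℝ} : IsLocallyAffineAt (fun y => a * y + b) x :=
  ⟨a, b, by filter_upwards with z; rfl⟩

theorem la_affine' {c s p x : ℝ} : IsLocallyAffineAt (fun y => c + s * (y - p)) x :=
  ⟨s, c - s * p, by filter_upwards with z; ring⟩


/-- Helper: tendsto for sequences within bounded distance of `n`. -/
theorem tendsto_top_of_lb (p : ℤ → ℝ) (C : ℝ) (h : ∀ n : ℤ, (n : ℝ) - C ≤ p n) :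
    Tendsto p atTop atTop := by
  apply tendsto_atTop_mono h
  have h1 : Tendsto (fun n : ℤ => (n : ℝ)) atTop atTop := tendsto_intCast_atTop_atTop
  simpa [sub_eq_add_neg] using tendsto_atTop_add_const_right atTop (-C) h1

theorem tendsto_bot_of_ub (p : ℤ → ℝ) (C : ℝ) (h : ∀ n : ℤ, p n ≤ (n : ℝ) + C) :
    Tendsto p atBot atBot := by
  apply tendsto_atBot_mono h
  have h1 : Tendsto (fun n : ℤ => (n : ℝ)) atBot atBot := tendsto_intCast_atBot_iff.2 tendsto_id
  exact tendsto_atBot_add_const_right atBot C h1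

/-- Build a `GlueData` whose blocks are affine maps. -/
noncomputable def affineGlue (p q s : ℤ → ℝ) (hp : StrictMono p) (hq : StrictMono q)
    (hptop : Tendsto p atTop atTop) (hpbot : Tendsto p atBot atBot)
    (hqtop : Tendsto q atTop atTop) (hqbot : Tendsto q atBot atBot)
    (hs : ∀ n, 0 < s n)
    (hc : ∀ n, q (n+1) - q n = s n * (p (n+1) - p n)) : GlueData where
  p := p
  q := q
  G := fun n x => q n + s n * (x - p n)
  hp := hp
  hq := hq
  hptop := hptop
  hpbot := hpbot
  hqtop := hqtop
  hqbot := hqbot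
  hmono := fun n x _ y _ hxy => by dsimp only; have := hs n; nlinarith
  hl := fun n => by ring
  hr := fun n => by have := hc n; linarith
  hsurj := by
    intro n y hy
    refine ⟨p n + (y - q n) / s n, ⟨?_, ?_⟩, ?_⟩
    · have : 0 ≤ (y - q n) / s n := div_nonneg (by linarith [hy.1]) (hs n).le
      linarith
    · have h2 : (y - q n) / s n ≤ p (n+1) - p n := by
        rw [div_le_iff₀ (hs n)]
        have := hc n
        have := hy.2
        nlinarith
      linarith
    · have : s n ≠ 0 := (hs n).ne'
      dsimp only
      field_simp
      ring
  hfin := fun n => by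
    have : Bad (fun x => q n + s n * (x - p n)) = ∅ := by
      ext z
      simp only [Bad, Set.mem_setOf_eq, Set.mem_empty_iff_false, iff_false, not_not]
      exact la_affine'
    rw [this, Set.empty_inter]
    exact Set.finite_empty

/-! ### The map `A` -/

noncomputable def aoff : ℤ → ℝ := fun r => if r = 0 then 0 else if r = 1 then 2/5
  else if r = 2 then 2 else 18/5
noncomputable def aval : ℤ → ℝ := fun r => if r = 0 then 0 else if r = 1 then 8/5
  else if r = 2 then 2 else 12/5
noncomputable def aslope : ℤ → ℝ := fun r => if r = 0 then 4 else if r = 1 then 1/4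
  else if r = 2 then 1/4 else 4

noncomputable def pA : ℤ → ℝ := fun n => 4 * ((n / 4 : ℤ) : ℝ) + aoff (n % 4)
noncomputable def qA : ℤ → ℝ := fun n => 4 * ((n / 4 : ℤ) : ℝ) + aval (n % 4)
noncomputable def sA : ℤ → ℝ := fun n => aslope (n % 4)

theorem pA_eq (k r : ℤ) (h0 : 0 ≤ r) (h3 : r < 4) :
    pA (4 * k + r) = 4 * (k : ℝ) + aoff r := by
  have e1 : (4 * k + r) / 4 = k := by omega
  have e2 : (4 * k + r) % 4 = r := by omega
  rw [pA, e1, e2]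

theorem qA_eq (k r : ℤ) (h0 : 0 ≤ r) (h3 : r < 4) :
    qA (4 * k + r) = 4 * (k : ℝ) + aval r := by
  have e1 : (4 * k + r) / 4 = k := by omega
  have e2 : (4 * k + r) % 4 = r := by omega
  rw [qA, e1, e2]

theorem sA_eq (k r : ℤ) (h0 : 0 ≤ r) (h3 : r < 4) : sA (4 * k + r) = aslope r := by
  have e2 : (4 * k + r) % 4 = r := by omega
  rw [sA, e2]

theorem pA_mono : StrictMono pA := by
  apply strictMono_int_of_lt_succ
  intro n
  have hr : n % 4 = 0 ∨ n % 4 = 1 ∨ n % 4 = 2 ∨ n % 4 = 3 := by omega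
  obtain ⟨k, hk⟩ : ∃ k, n = 4 * k + n % 4 := ⟨n / 4, by omega⟩
  rcases hr with h | h | h | h <;>
    rw [hk, h] <;>
    [ (rw [pA_eq k 0 (by norm_num) (by norm_num),
        show 4*k+(0:ℤ)+1 = 4*k+1 by ring, pA_eq k 1 (by norm_num) (by norm_num)]);
      (rw [pA_eq k 1 (by norm_num) (by norm_num),
        show 4*k+(1:ℤ)+1 = 4*k+2 by ring, pA_eq k 2 (by norm_num) (by norm_num)]);
      (rw [pA_eq k 2 (by norm_num) (by norm_num),
        show 4*k+(2:ℤ)+1 = 4*k+3 by ring, pA_eq k 3 (by norm_num) (by norm_num)]);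
      (rw [pA_eq k 3 (by norm_num) (by norm_num),
        show 4*k+(3:ℤ)+1 = 4*(k+1)+0 by ring, pA_eq (k+1) 0 (by norm_num) (by norm_num)])] <;>
    simp [aoff] <;> push_cast <;> norm_num <;> linarith


theorem int4_cases {P : ℤ → Prop} (h0 : ∀ k, P (4*k)) (h1 : ∀ k, P (4*k+1))
    (h2 : ∀ k, P (4*k+2)) (h3 : ∀ k, P (4*k+3)) (n : ℤ) : P n := by
  obtain ⟨k, hk⟩ : ∃ k, n = 4*k + n % 4 := ⟨n/4, by omega⟩
  have hr : n % 4 = 0 ∨ n % 4 = 1 ∨ n % 4 = 2 ∨ n % 4 = 3 := by omega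
  rcases hr with h | h | h | h <;> rw [hk, h]
  · rw [show 4*k+(0:ℤ) = 4*k by ring]; exact h0 k
  · exact h1 k
  · exact h2 k
  · exact h3 k


theorem pA0 (k : ℤ) : pA (4*k) = 4*(k:ℝ) := by
  have h := pA_eq k 0 (by norm_num) (by norm_num)
  rw [show 4*k+(0:ℤ) = 4*k by ring] at h
  simpa [aoff] using h
theorem pA1 (k : ℤ) : pA (4*k+1) = 4*(k:ℝ) + 2/5 := by
  have h := pA_eq k 1 (by norm_num) (by norm_num); simpa [aoff] using h
theorem pA2 (k : ℤ) : pA (4*k+2) = 4*(k:ℝ) + 2 := by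
  have h := pA_eq k 2 (by norm_num) (by norm_num); simpa [aoff] using h
theorem pA3 (k : ℤ) : pA (4*k+3) = 4*(k:ℝ) + 18/5 := by
  have h := pA_eq k 3 (by norm_num) (by norm_num); simpa [aoff] using h
theorem pA4 (k : ℤ) : pA (4*k+4) = 4*(k:ℝ) + 4 := by
  have h := pA0 (k+1)
  rw [show 4*(k+1) = 4*k+4 by ring] at h
  rw [h]; push_cast; ring
theorem qA0 (k : ℤ) : qA (4*k) = 4*(k:ℝ) := by
  have h := qA_eq k 0 (by norm_num) (by norm_num)
  rw [show 4*k+(0:ℤ) = 4*k by ring] at h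
  simpa [aval] using h
theorem qA1 (k : ℤ) : qA (4*k+1) = 4*(k:ℝ) + 8/5 := by
  have h := qA_eq k 1 (by norm_num) (by norm_num); simpa [aval] using h
theorem qA2 (k : ℤ) : qA (4*k+2) = 4*(k:ℝ) + 2 := by
  have h := qA_eq k 2 (by norm_num) (by norm_num); simpa [aval] using h
theorem qA3 (k : ℤ) : qA (4*k+3) = 4*(k:ℝ) + 12/5 := by
  have h := qA_eq k 3 (by norm_num) (by norm_num); simpa [aval] using h
theorem qA4 (k : ℤ) : qA (4*k+4) = 4*(k:ℝ) + 4 := by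
  have h := qA0 (k+1)
  rw [show 4*(k+1) = 4*k+4 by ring] at h
  rw [h]; push_cast; ring
theorem sA0 (k : ℤ) : sA (4*k) = 4 := by
  have h := sA_eq k 0 (by norm_num) (by norm_num)
  rw [show 4*k+(0:ℤ) = 4*k by ring] at h
  simpa [aslope] using h
theorem sA1 (k : ℤ) : sA (4*k+1) = 1/4 := by
  have h := sA_eq k 1 (by norm_num) (by norm_num); simpa [aslope] using h
theorem sA2 (k : ℤ) : sA (4*k+2) = 1/4 := by
  have h := sA_eq k 2 (by norm_num) (by norm_num); simpa [aslope] using h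
theorem sA3 (k : ℤ) : sA (4*k+3) = 4 := by
  have h := sA_eq k 3 (by norm_num) (by norm_num); simpa [aslope] using h

theorem qA_mono : StrictMono qA := by
  apply strictMono_int_of_lt_succ
  apply int4_cases (P := fun n => qA n < qA (n+1))
  · intro k; rw [qA0, qA1]; norm_num
  · intro k; rw [show 4*k+(1:ℤ)+1 = 4*k+2 by ring, qA1, qA2]; norm_num
  · intro k; rw [show 4*k+(2:ℤ)+1 = 4*k+3 by ring, qA2, qA3]; norm_num
  · intro k; rw [show 4*k+(3:ℤ)+1 = 4*k+4 by ring, qA3, qA4]; norm_num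

theorem sA_pos : ∀ n, 0 < sA n := by
  intro n
  have hr : n % 4 = 0 ∨ n % 4 = 1 ∨ n % 4 = 2 ∨ n % 4 = 3 := by omega
  rcases hr with h | h | h | h <;> simp [sA, aslope, h] <;> norm_num

theorem hcA : ∀ n, qA (n+1) - qA n = sA n * (pA (n+1) - pA n) := by
  apply int4_cases (P := fun n => qA (n+1) - qA n = sA n * (pA (n+1) - pA n))
  · intro k; rw [qA1, qA0, sA0, pA1, pA0]; norm_num
  · intro k; rw [show 4*k+(1:ℤ)+1 = 4*k+2 by ring, qA2, qA1, sA1, pA2, pA1]; norm_num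
  · intro k; rw [show 4*k+(2:ℤ)+1 = 4*k+3 by ring, qA3, qA2, sA2, pA3, pA2]; norm_num
  · intro k; rw [show 4*k+(3:ℤ)+1 = 4*k+4 by ring, qA4, qA3, sA3, pA4, pA3]; norm_num

theorem pA_bounds (n : ℤ) : (n:ℝ) - 4 ≤ pA n ∧ pA n ≤ (n:ℝ) + 4 := by
  have h3 : 4 * (n/4) = n - n % 4 := by omega
  have hcast : 4 * ((n/4 : ℤ):ℝ) = (n:ℝ) - ((n % 4 : ℤ):ℝ) := by
    have := congrArg (fun m : ℤ => (m:ℝ)) h3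
    push_cast at this
    linarith
  have hoff : 0 ≤ aoff (n % 4) ∧ aoff (n % 4) ≤ 18/5 := by
    have hr : n % 4 = 0 ∨ n % 4 = 1 ∨ n % 4 = 2 ∨ n % 4 = 3 := by omega
    rcases hr with h | h | h | h <;> rw [h] <;> constructor <;> simp [aoff] <;> norm_num
  have hm : (0:ℝ) ≤ ((n % 4 : ℤ):ℝ) ∧ ((n % 4 : ℤ):ℝ) ≤ 3 := by
    constructor
    · exact_mod_cast (by omega : (0:ℤ) ≤ n % 4)
    · exact_mod_cast (by omega : n % 4 ≤ (3:ℤ))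
  unfold pA
  constructor <;> [linarith [hcast, hoff.1, hoff.2, hm.1, hm.2];
    linarith [hcast, hoff.1, hoff.2, hm.1, hm.2]]

theorem qA_bounds (n : ℤ) : (n:ℝ) - 4 ≤ qA n ∧ qA n ≤ (n:ℝ) + 4 := by
  have h3 : 4 * (n/4) = n - n % 4 := by omega
  have hcast : 4 * ((n/4 : ℤ):ℝ) = (n:ℝ) - ((n % 4 : ℤ):ℝ) := by
    have := congrArg (fun m : ℤ => (m:ℝ)) h3
    push_cast at this
    linarith
  have hoff : 0 ≤ aval (n % 4) ∧ aval (n % 4) ≤ 18/5 := by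
    have hr : n % 4 = 0 ∨ n % 4 = 1 ∨ n % 4 = 2 ∨ n % 4 = 3 := by omega
    rcases hr with h | h | h | h <;> rw [h] <;> constructor <;> simp [aval] <;> norm_num
  have hm : (0:ℝ) ≤ ((n % 4 : ℤ):ℝ) ∧ ((n % 4 : ℤ):ℝ) ≤ 3 := by
    constructor
    · exact_mod_cast (by omega : (0:ℤ) ≤ n % 4)
    · exact_mod_cast (by omega : n % 4 ≤ (3:ℤ))
  unfold qA
  constructor <;> [linarith [hcast, hoff.1, hoff.2, hm.1, hm.2];
    linarith [hcast, hoff.1, hoff.2, hm.1, hm.2]]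

noncomputable def AD : GlueData :=
  affineGlue pA qA sA pA_mono qA_mono
    (tendsto_top_of_lb pA 4 (fun n => (pA_bounds n).1))
    (tendsto_bot_of_ub pA 4 (fun n => (pA_bounds n).2))
    (tendsto_top_of_lb qA 4 (fun n => (qA_bounds n).1))
    (tendsto_bot_of_ub qA 4 (fun n => (qA_bounds n).2))
    sA_pos hcA

noncomputable def Afun : ℝ → ℝ := AD.fn

theorem AD_p : AD.p = pA := rfl
theorem AD_q : AD.q = qA := rfl
theorem AD_G : ∀ n x, AD.G n x = qA n + sA n * (x - pA n) := fun _ _ => rfl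


theorem pA_tt : Tendsto pA atTop atTop := tendsto_top_of_lb pA 4 (fun n => (pA_bounds n).1)
theorem pA_tb : Tendsto pA atBot atBot := tendsto_bot_of_ub pA 4 (fun n => (pA_bounds n).2)

theorem Afun_on0 (k : ℤ) {x : ℝ} (h1 : 4*(k:ℝ) ≤ x) (h2 : x < 4*(k:ℝ) + 2/5) :
    Afun x = 4*(k:ℝ) + 4 * (x - 4*(k:ℝ)) := by
  have e := AD.fn_eq (n := 4*k) (x := x) (by rw [AD_p, pA0]; exact h1)
    (by rw [AD_p, pA1]; exact h2)
  rw [Afun, e, AD_G, qA0, sA0, pA0]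

theorem Afun_on1 (k : ℤ) {x : ℝ} (h1 : 4*(k:ℝ) + 2/5 ≤ x) (h2 : x < 4*(k:ℝ) + 2) :
    Afun x = 4*(k:ℝ) + 8/5 + 1/4 * (x - (4*(k:ℝ) + 2/5)) := by
  have e := AD.fn_eq (n := 4*k+1) (x := x) (by rw [AD_p, pA1]; exact h1)
    (by rw [AD_p, show 4*k+(1:ℤ)+1 = 4*k+2 by ring, pA2]; exact h2)
  rw [Afun, e, AD_G, qA1, sA1, pA1]

theorem Afun_on2 (k : ℤ) {x : ℝ} (h1 : 4*(k:ℝ) + 2 ≤ x) (h2 : x < 4*(k:ℝ) + 18/5) :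
    Afun x = 4*(k:ℝ) + 2 + 1/4 * (x - (4*(k:ℝ) + 2)) := by
  have e := AD.fn_eq (n := 4*k+2) (x := x) (by rw [AD_p, pA2]; exact h1)
    (by rw [AD_p, show 4*k+(2:ℤ)+1 = 4*k+3 by ring, pA3]; exact h2)
  rw [Afun, e, AD_G, qA2, sA2, pA2]

theorem Afun_on3 (k : ℤ) {x : ℝ} (h1 : 4*(k:ℝ) + 18/5 ≤ x) (h2 : x < 4*(k:ℝ) + 4) :
    Afun x = 4*(k:ℝ) + 12/5 + 4 * (x - (4*(k:ℝ) + 18/5)) := by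
  have e := AD.fn_eq (n := 4*k+3) (x := x) (by rw [AD_p, pA3]; exact h1)
    (by rw [AD_p, show 4*k+(3:ℤ)+1 = 4*k+4 by ring, pA4]; exact h2)
  rw [Afun, e, AD_G, qA3, sA3, pA3]

theorem EA : ∀ x : ℝ, Afun (Afun x + 2) = x + 2 := by
  intro x
  obtain ⟨n, h1, h2⟩ := ex_block pA pA_tb pA_tt x
  obtain ⟨k, hk⟩ : ∃ k, n = 4*k + n % 4 := ⟨n/4, by omega⟩
  have hr : n % 4 = 0 ∨ n % 4 = 1 ∨ n % 4 = 2 ∨ n % 4 = 3 := by omega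
  have hk1 : ((k:ℝ)) + 1 = ((k+1:ℤ):ℝ) := by push_cast; ring
  rcases hr with h | h | h | h <;> rw [hk, h] at h1 h2
  · rw [show 4*k+(0:ℤ) = 4*k by ring] at h1
    rw [show 4*k+(0:ℤ)+1 = 4*k+1 by ring] at h2
    rw [pA0] at h1; rw [pA1] at h2
    rw [Afun_on0 k h1 h2, Afun_on2 k (by linarith) (by linarith)]
    ring
  · rw [show 4*k+(1:ℤ)+1 = 4*k+2 by ring] at h2
    rw [pA1] at h1; rw [pA2] at h2
    rw [Afun_on1 k h1 h2, Afun_on3 k (by linarith) (by linarith)]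
    ring
  · rw [show 4*k+(2:ℤ)+1 = 4*k+3 by ring] at h2
    rw [pA2] at h1; rw [pA3] at h2
    rw [Afun_on2 k h1 h2, Afun_on0 (k+1) (by push_cast; linarith) (by push_cast; linarith)]
    push_cast
    ring
  · rw [show 4*k+(3:ℤ)+1 = 4*k+4 by ring] at h2
    rw [pA3] at h1; rw [pA4] at h2
    rw [Afun_on3 k h1 h2, Afun_on1 (k+1) (by push_cast; linarith) (by push_cast; linarith)]
    push_cast
    ring


theorem tendsto_top_of_lb2 (p : ℤ → ℝ) (c C : ℝ) (hc : 0 < c)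
    (h : ∀ n : ℤ, c * (n : ℝ) - C ≤ p n) : Tendsto p atTop atTop := by
  apply tendsto_atTop_mono h
  have h1 : Tendsto (fun n : ℤ => c * (n : ℝ)) atTop atTop :=
    Tendsto.const_mul_atTop hc tendsto_intCast_atTop_atTop
  simpa [sub_eq_add_neg] using tendsto_atTop_add_const_right atTop (-C) h1

theorem tendsto_bot_of_ub2 (p : ℤ → ℝ) (c C : ℝ) (hc : 0 < c)
    (h : ∀ n : ℤ, p n ≤ c * (n : ℝ) + C) : Tendsto p atBot atBot := by
  apply tendsto_atBot_mono h
  have h1 : Tendsto (fun n : ℤ => c * (n : ℝ)) atBot atBot := by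
    have h0 : Tendsto (fun n : ℤ => (n : ℝ)) atBot atBot := tendsto_intCast_atBot_iff.2 tendsto_id
    exact Tendsto.const_mul_atBot hc h0
  exact tendsto_atBot_add_const_right atBot C h1

noncomputable def koff : ℤ → ℝ := fun r => if r = 0 then 1/3 else 2/3
noncomputable def pK : ℤ → ℝ := fun n => 4 * ((n / 2 : ℤ) : ℝ) + koff (n % 2)
noncomputable def qK : ℤ → ℝ := fun n => pK (n + 1)
noncomputable def sK : ℤ → ℝ := fun n => if n % 2 = 0 then 11 else 1/11

theorem pK0 (k : ℤ) : pK (2*k) = 4*(k:ℝ) + 1/3 := by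
  have e1 : (2 * k) / 2 = k := by omega
  have e2 : (2 * k) % 2 = 0 := by omega
  rw [pK, e1, e2]; simp [koff]

theorem pK1 (k : ℤ) : pK (2*k+1) = 4*(k:ℝ) + 2/3 := by
  have e1 : (2 * k + 1) / 2 = k := by omega
  have e2 : (2 * k + 1) % 2 = 1 := by omega
  rw [pK, e1, e2]; simp [koff]

theorem pK2 (k : ℤ) : pK (2*k+2) = 4*(k:ℝ) + 13/3 := by
  have h := pK0 (k+1)
  rw [show 2*(k+1) = 2*k+2 by ring] at h
  rw [h]; push_cast; ring

theorem pK3 (k : ℤ) : pK (2*k+3) = 4*(k:ℝ) + 14/3 := by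
  have h := pK1 (k+1)
  rw [show 2*(k+1)+1 = 2*k+3 by ring] at h
  rw [h]; push_cast; ring

theorem sK0 (k : ℤ) : sK (2*k) = 11 := by
  have e2 : (2 * k) % 2 = 0 := by omega
  rw [sK]; simp [e2]

theorem sK1 (k : ℤ) : sK (2*k+1) = 1/11 := by
  have e2 : (2 * k + 1) % 2 = 1 := by omega
  rw [sK]; simp [e2]

theorem int2_cases {P : ℤ → Prop} (h0 : ∀ k, P (2*k)) (h1 : ∀ k, P (2*k+1)) (n : ℤ) : P n := by
  obtain ⟨k, hk⟩ : ∃ k, n = 2*k + n % 2 := ⟨n/2, by omega⟩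
  have hr : n % 2 = 0 ∨ n % 2 = 1 := by omega
  rcases hr with h | h <;> rw [hk, h]
  · rw [show 2*k+(0:ℤ) = 2*k by ring]; exact h0 k
  · exact h1 k

theorem pK_mono : StrictMono pK := by
  apply strictMono_int_of_lt_succ
  apply int2_cases (P := fun n => pK n < pK (n+1))
  · intro k; rw [pK0, pK1]; norm_num
  · intro k; rw [show 2*k+(1:ℤ)+1 = 2*k+2 by ring, pK1, pK2]; norm_num

theorem qK_mono : StrictMono qK := fun a b h => pK_mono (by omega)

theorem sK_pos : ∀ n, 0 < sK n := by
  intro n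
  have hr : n % 2 = 0 ∨ n % 2 = 1 := by omega
  rcases hr with h | h <;> simp [sK, h] <;> norm_num

theorem hcK : ∀ n, qK (n+1) - qK n = sK n * (pK (n+1) - pK n) := by
  apply int2_cases (P := fun n => qK (n+1) - qK n = sK n * (pK (n+1) - pK n))
  · intro k
    rw [qK, qK, show 2*k+1+1 = 2*k+2 by ring, pK2, pK1, sK0, pK0]
    norm_num
  · intro k
    rw [qK, qK, show 2*k+(1:ℤ)+1+1 = 2*k+3 by ring, show 2*k+(1:ℤ)+1 = 2*k+2 by ring,
      pK3, pK2, sK1, pK1]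
    norm_num

theorem pK_bounds (n : ℤ) : 2*(n:ℝ) - 2 ≤ pK n ∧ pK n ≤ 2*(n:ℝ) + 2 := by
  have h3 : 4 * (n/2) = 2*n - 2*(n % 2) := by omega
  have hcast : 4 * ((n/2 : ℤ):ℝ) = 2*(n:ℝ) - 2*((n % 2 : ℤ):ℝ) := by
    have := congrArg (fun m : ℤ => (m:ℝ)) h3
    push_cast at this
    linarith
  have hoff : 0 ≤ koff (n % 2) ∧ koff (n % 2) ≤ 2/3 := by
    have hr : n % 2 = 0 ∨ n % 2 = 1 := by omega
    rcases hr with h | h <;> rw [h] <;> constructor <;> simp [koff] <;> norm_num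
  have hm : (0:ℝ) ≤ ((n % 2 : ℤ):ℝ) ∧ ((n % 2 : ℤ):ℝ) ≤ 1 := by
    constructor
    · exact_mod_cast (by omega : (0:ℤ) ≤ n % 2)
    · exact_mod_cast (by omega : n % 2 ≤ (1:ℤ))
  unfold pK
  constructor <;> [linarith [hcast, hoff.1, hoff.2, hm.1, hm.2];
    linarith [hcast, hoff.1, hoff.2, hm.1, hm.2]]

theorem qK_bounds (n : ℤ) : 2*(n:ℝ) - 2 ≤ qK n ∧ qK n ≤ 2*(n:ℝ) + 4 := by
  have h := pK_bounds (n+1)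
  have hc : ((n+1:ℤ):ℝ) = (n:ℝ) + 1 := by push_cast; ring
  rw [qK]
  rw [hc] at h
  constructor <;> linarith [h.1, h.2]

theorem pK_tt : Tendsto pK atTop atTop :=
  tendsto_top_of_lb2 pK 2 2 (by norm_num) (fun n => (pK_bounds n).1)
theorem pK_tb : Tendsto pK atBot atBot :=
  tendsto_bot_of_ub2 pK 2 2 (by norm_num) (fun n => (pK_bounds n).2)
theorem qK_tt : Tendsto qK atTop atTop :=
  tendsto_top_of_lb2 qK 2 2 (by norm_num) (fun n => (qK_bounds n).1)
theorem qK_tb : Tendsto qK atBot atBot :=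
  tendsto_bot_of_ub2 qK 2 4 (by norm_num) (fun n => (qK_bounds n).2)

noncomputable def KD : GlueData :=
  affineGlue pK qK sK pK_mono qK_mono pK_tt pK_tb qK_tt qK_tb sK_pos hcK

noncomputable def Kfun : ℝ → ℝ := KD.fn

theorem KD_p : KD.p = pK := rfl
theorem KD_G : ∀ n x, KD.G n x = qK n + sK n * (x - pK n) := fun _ _ => rfl

theorem Kfun_on0 (k : ℤ) {x : ℝ} (h1 : 4*(k:ℝ) + 1/3 ≤ x) (h2 : x < 4*(k:ℝ) + 2/3) :
    Kfun x = 4*(k:ℝ) + 2/3 + 11 * (x - (4*(k:ℝ) + 1/3)) := by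
  have e := KD.fn_eq (n := 2*k) (x := x) (by rw [KD_p, pK0]; exact h1)
    (by rw [KD_p, pK1]; exact h2)
  rw [Kfun, e, KD_G, qK, pK1, sK0, pK0]

theorem Kfun_on1 (k : ℤ) {x : ℝ} (h1 : 4*(k:ℝ) + 2/3 ≤ x) (h2 : x < 4*(k:ℝ) + 13/3) :
    Kfun x = 4*(k:ℝ) + 13/3 + 1/11 * (x - (4*(k:ℝ) + 2/3)) := by
  have e := KD.fn_eq (n := 2*k+1) (x := x) (by rw [KD_p, pK1]; exact h1)
    (by rw [KD_p, show 2*k+(1:ℤ)+1 = 2*k+2 by ring, pK2]; exact h2)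
  rw [Kfun, e, KD_G, qK, show 2*k+(1:ℤ)+1 = 2*k+2 by ring, pK2, sK1, pK1]



theorem EK : ∀ y : ℝ, Afun (Kfun (Afun y - 1)) = Kfun y + 1 := by
  intro y
  obtain ⟨n, h1, h2⟩ := ex_block pA pA_tb pA_tt y
  obtain ⟨k, hk⟩ : ∃ k, n = 4*k + n % 4 := ⟨n/4, by omega⟩
  have hr : n % 4 = 0 ∨ n % 4 = 1 ∨ n % 4 = 2 ∨ n % 4 = 3 := by omega
  have hcm : ((k-1:ℤ):ℝ) = (k:ℝ) - 1 := by push_cast; ring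
  have hcp : ((k+1:ℤ):ℝ) = (k:ℝ) + 1 := by push_cast; ring
  rcases hr with h | h | h | h <;> rw [hk, h] at h1 h2
  · -- y ∈ [4k, 4k+2/5)
    rw [show 4*k+(0:ℤ) = 4*k by ring] at h1
    rw [show 4*k+(0:ℤ)+1 = 4*k+1 by ring] at h2
    rw [pA0] at h1; rw [pA1] at h2
    have e1 := Afun_on0 (k := k) (x := y) h1 h2
    rcases lt_or_ge y (4*(k:ℝ) + 1/3) with hs | hs
    · -- case 1
      have e2 := Kfun_on1 (k := k-1) (x := Afun y - 1)
        (by rw [hcm]; linarith) (by rw [hcm]; linarith)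
      rw [hcm] at e2
      have e3 := Afun_on1 (k := k) (x := Kfun (Afun y - 1))
        (by linarith) (by linarith)
      have e4 := Kfun_on1 (k := k-1) (x := y) (by rw [hcm]; linarith) (by rw [hcm]; linarith)
      rw [hcm] at e4
      rw [e3, e2, e4, e1]; ring
    rcases lt_or_ge y (4*(k:ℝ) + 4/11) with hs2 | hs2
    · -- case 2
      have e2 := Kfun_on0 (k := k) (x := Afun y - 1) (by linarith) (by linarith)
      have e3 := Afun_on1 (k := k) (x := Kfun (Afun y - 1)) (by linarith) (by linarith)
      have e4 := Kfun_on0 (k := k) (x := y) (by linarith) (by linarith)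
      rw [e3, e2, e4, e1]; ring
    · -- case 3
      have e2 := Kfun_on0 (k := k) (x := Afun y - 1) (by linarith) (by linarith)
      have e3 := Afun_on2 (k := k) (x := Kfun (Afun y - 1)) (by linarith) (by linarith)
      have e4 := Kfun_on0 (k := k) (x := y) (by linarith) (by linarith)
      rw [e3, e2, e4, e1]; ring
  · -- y ∈ [4k+2/5, 4k+2)
    rw [show 4*k+(1:ℤ)+1 = 4*k+2 by ring] at h2
    rw [pA1] at h1; rw [pA2] at h2
    have e1 := Afun_on1 (k := k) (x := y) h1 h2
    rcases lt_or_ge y (4*(k:ℝ) + 6/11) with hs | hs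
    · -- case 4
      have e2 := Kfun_on0 (k := k) (x := Afun y - 1) (by linarith) (by linarith)
      have e3 := Afun_on3 (k := k) (x := Kfun (Afun y - 1)) (by linarith) (by linarith)
      have e4 := Kfun_on0 (k := k) (x := y) (by linarith) (by linarith)
      rw [e3, e2, e4, e1]; ring
    rcases lt_or_ge y (4*(k:ℝ) + 2/3) with hs2 | hs2
    · -- case 5
      have e2 := Kfun_on0 (k := k) (x := Afun y - 1) (by linarith) (by linarith)
      have e3 := Afun_on0 (k := k+1) (x := Kfun (Afun y - 1))
        (by rw [hcp]; linarith) (by rw [hcp]; linarith)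
      rw [hcp] at e3
      have e4 := Kfun_on0 (k := k) (x := y) (by linarith) (by linarith)
      rw [e3, e2, e4, e1]; ring
    · -- case 6
      have e2 := Kfun_on1 (k := k) (x := Afun y - 1) (by linarith) (by linarith)
      have e3 := Afun_on0 (k := k+1) (x := Kfun (Afun y - 1))
        (by rw [hcp]; linarith) (by rw [hcp]; linarith)
      rw [hcp] at e3
      have e4 := Kfun_on1 (k := k) (x := y) (by linarith) (by linarith)
      rw [e3, e2, e4, e1]; ring
  · -- case 7 : y ∈ [4k+2, 4k+18/5)
    rw [show 4*k+(2:ℤ)+1 = 4*k+3 by ring] at h2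
    rw [pA2] at h1; rw [pA3] at h2
    have e1 := Afun_on2 (k := k) (x := y) h1 h2
    have e2 := Kfun_on1 (k := k) (x := Afun y - 1) (by linarith) (by linarith)
    have e3 := Afun_on0 (k := k+1) (x := Kfun (Afun y - 1))
      (by rw [hcp]; linarith) (by rw [hcp]; linarith)
    rw [hcp] at e3
    have e4 := Kfun_on1 (k := k) (x := y) (by linarith) (by linarith)
    rw [e3, e2, e4, e1]; ring
  · -- case 8 : y ∈ [4k+18/5, 4k+4)
    rw [show 4*k+(3:ℤ)+1 = 4*k+4 by ring] at h2
    rw [pA3] at h1; rw [pA4] at h2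
    have e1 := Afun_on3 (k := k) (x := y) h1 h2
    have e2 := Kfun_on1 (k := k) (x := Afun y - 1) (by linarith) (by linarith)
    have e3 := Afun_on1 (k := k+1) (x := Kfun (Afun y - 1))
      (by rw [hcp]; linarith) (by rw [hcp]; linarith)
    rw [hcp] at e3
    have e4 := Kfun_on1 (k := k) (x := y) (by linarith) (by linarith)
    rw [e3, e2, e4, e1]; ring

theorem la_postcomp {g : ℝ → ℝ} {x u v : ℝ} (h : IsLocallyAffineAt g x) :
    IsLocallyAffineAt (fun z => u + g z / v) x := by
  obtain ⟨a, b, hab⟩ := h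
  refine ⟨a / v, u + b / v, ?_⟩
  filter_upwards [hab] with z hz
  rw [hz]; ring

theorem locfin_Icc {g : ℝ → ℝ} (h : LocFin g) (a b : ℝ) : (Bad g ∩ Set.Icc a b).Finite := by
  have hK : IsCompact (Set.Icc a b) := isCompact_Icc
  choose U hU hUf using h
  obtain ⟨t, ht⟩ := hK.elim_nhds_subcover' (fun x _ => U x) (fun x _ => hU x)
  refine Set.Finite.subset (t.finite_toSet.biUnion (fun x _ => hUf x.1)) ?_
  rintro y ⟨hy1, hy2⟩
  have hm := ht hy2
  simp only [Set.mem_iUnion, exists_prop] at hm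
  obtain ⟨x, hx, hyU⟩ := hm
  simp only [Set.mem_iUnion, exists_prop]
  exact ⟨x, hx, hy1, hyU⟩

/-- The translation `x ↦ x + 1` as a permutation. -/
noncomputable def Tp : Equiv.Perm ℝ :=
  mkPerm (fun x => x + 1) (fun a b h => by simpa using h) (fun y => ⟨y - 1, by ring⟩)

theorem Tp_apply (x : ℝ) : Tp x = x + 1 := by rw [Tp]; rfl

theorem Tp_inv_apply (x : ℝ) : Tp⁻¹ x = x - 1 := by
  have h : Tp (x - 1) = x := by rw [Tp_apply]; ring
  conv_lhs => rw [← h]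
  exact Tp.symm_apply_apply _

theorem good_Tp : Good Tp := by
  constructor
  · intro a b h; rw [Tp_apply, Tp_apply]; linarith
  · intro x
    refine ⟨Set.univ, Filter.univ_mem, Set.Finite.subset (Set.finite_empty) ?_⟩
    rintro y ⟨hy, -⟩
    exact absurd ⟨1, 1, by filter_upwards with z; rw [Tp_apply]; ring⟩ hy

section Chi
variable (w : Equiv.Perm ℝ)

noncomputable def pW : ℤ → ℝ := fun k => (w ^ k) 0
noncomputable def GW : ℤ → ℝ → ℝ := fun k x => (k : ℝ) + ((w ^ (-k)) x) / (w 0)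

variable {w}
variable (hw : Good w) (hfpf : ∀ x, x < w x)

theorem pW_succ (k : ℤ) : pW w (k+1) = w (pW w k) := by
  rw [pW, pW, show w^(k+1) = w * w^k by rw [add_comm, zpow_add, zpow_one]]
  rfl

include hfpf in
theorem pW_mono : StrictMono (pW w) := by
  apply strictMono_int_of_lt_succ
  intro k
  rw [pW_succ]
  exact hfpf _

include hw hfpf in
theorem pW_tt : Tendsto (pW w) atTop atTop := by
  apply tendsto_atTop_atTop_of_monotone' (pW_mono hfpf).monotone
  intro hbdd
  set L := sSup (Set.range (pW w)) with hL
  have hub : ∀ k, pW w k ≤ L := fun k => le_csSup hbdd ⟨k, rfl⟩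
  have h1 : w⁻¹ L < L := by
    have := hfpf (w⁻¹ L)
    rwa [show ∀ z, w (w⁻¹ z) = z from w.apply_symm_apply] at this
  obtain ⟨z, ⟨k, hk⟩, hz⟩ := exists_lt_of_lt_csSup (Set.range_nonempty _) h1
  rw [← hk] at hz
  have h2 : L < pW w (k + 1) := by
    rw [pW_succ]
    calc L = w (w⁻¹ L) := (w.apply_symm_apply L).symm
    _ < w (pW w k) := hw.1 hz
  exact absurd (hub (k+1)) (not_le.mpr h2)

include hw hfpf in
theorem pW_tb : Tendsto (pW w) atBot atBot := by
  apply tendsto_atBot_atBot_of_monotone' (pW_mono hfpf).monotone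
  intro hbdd
  set L := sInf (Set.range (pW w)) with hL
  have hub : ∀ k, L ≤ pW w k := fun k => csInf_le hbdd ⟨k, rfl⟩
  have h1 : L < w L := hfpf L
  obtain ⟨z, ⟨k, hk⟩, hz⟩ := exists_lt_of_csInf_lt (Set.range_nonempty _) h1
  rw [← hk] at hz
  have hprev : pW w k = w (pW w (k - 1)) := by
    have := pW_succ (w := w) (k - 1)
    rw [show k - 1 + 1 = k by ring] at this
    exact this
  have h2 : pW w (k-1) < L := by
    have : w (pW w (k-1)) < w L := by rw [← hprev]; exact hz
    exact (hw.1.lt_iff_lt).mp this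
  exact absurd (hub (k-1)) (not_le.mpr h2)

include hw hfpf in
theorem c_pos : 0 < w 0 := by simpa using hfpf 0

noncomputable def chiData (hw : Good w) (hfpf : ∀ x, x < w x) : GlueData where
  p := pW w
  q := fun k => (k : ℝ)
  G := GW w
  hp := pW_mono hfpf
  hq := fun a b h => by dsimp only; exact_mod_cast h
  hptop := pW_tt hw hfpf
  hpbot := pW_tb hw hfpf
  hqtop := tendsto_intCast_atTop_atTop
  hqbot := tendsto_intCast_atBot_iff.2 tendsto_id
  hmono := by
    intro k x _ y _ hxy
    have h1 : (w ^ (-k)) x < (w ^ (-k)) y := (hw.zpow (-k)).1 hxy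
    have hc := c_pos hw hfpf
    have h2 : (w ^ (-k)) x / (w 0) < (w ^ (-k)) y / (w 0) := by gcongr
    show (k : ℝ) + ((w ^ (-k)) x) / (w 0) < (k : ℝ) + ((w ^ (-k)) y) / (w 0)
    linarith
  hl := by
    intro k
    have h0 : (w ^ (-k)) ((w ^ k) 0) = 0 := by
      rw [← Equiv.Perm.mul_apply, zpow_neg, inv_mul_cancel]
      rfl
    rw [GW, pW, h0]
    simp
  hr := by
    intro k
    have h0 : (w ^ (-k)) ((w ^ (k+1)) 0) = w 0 := by
      rw [← Equiv.Perm.mul_apply, ← zpow_add, show -k + (k+1) = 1 by ring, zpow_one]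
    have hc := c_pos hw hfpf
    rw [GW, pW, h0, div_self hc.ne']
    push_cast
    ring
  hsurj := by
    intro k y hy
    have hc := c_pos hw hfpf
    simp only [Set.mem_Icc] at hy
    push_cast at hy
    have hy1 : (0:ℝ) ≤ (y - k) := by linarith [hy.1]
    have hy2 : (y - k) ≤ 1 := by linarith [hy.2]
    refine ⟨(w ^ k) ((y - k) * (w 0)), ⟨?_, ?_⟩, ?_⟩
    · rw [pW]
      apply ((hw.zpow k).1.monotone)
      positivity
    · rw [pW_succ]
      have hcm : w (pW w k) = (w ^ k) (w 0) := by
        simp only [pW]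
        rw [← Equiv.Perm.mul_apply, ← Equiv.Perm.mul_apply,
          (Commute.zpow_right (Commute.refl w) k).eq]
      rw [hcm]
      apply ((hw.zpow k).1.monotone)
      nlinarith
    · rw [GW]
      have h0 : (w ^ (-k)) ((w ^ k) ((y - k) * (w 0))) = (y - k) * (w 0) := by
        rw [← Equiv.Perm.mul_apply, zpow_neg, inv_mul_cancel]
        rfl
      rw [h0]
      field_simp
      ring
  hfin := by
    intro k
    have hsub : Bad (GW w k) ⊆ Bad ⇑(w ^ (-k)) := by
      intro z hz
      by_contra hc
      simp only [Bad, Set.mem_setOf_eq, not_not] at hc hz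
      exact hz (la_postcomp hc)
    apply Set.Finite.subset (locfin_Icc (hw.zpow (-k)).2 (pW w k) (pW w (k+1)))
    rintro y ⟨hy1, hy2⟩
    exact ⟨hsub hy1, hy2.1.le, hy2.2.le⟩

theorem chi_shift (hw : Good w) (hfpf : ∀ x, x < w x) :
    ∀ x, (chiData hw hfpf).fn (w x) = (chiData hw hfpf).fn x + 1 := by
  intro x
  set D := chiData hw hfpf with hD
  have hDp : D.p = pW w := rfl
  obtain ⟨k, h1, h2⟩ := ex_block (pW w) (pW_tb hw hfpf) (pW_tt hw hfpf) x
  have e1 : D.fn x = GW w k x := D.fn_eq (n := k) (x := x) (by rw [hDp]; exact h1)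
    (by rw [hDp]; exact h2)
  have hw1 : pW w (k+1) ≤ w x := by rw [pW_succ]; exact (hw.1.monotone h1)
  have hw2 : w x < pW w (k+2) := by
    have : pW w (k+2) = w (pW w (k+1)) := by
      have := pW_succ (w := w) (k+1)
      rwa [show k+1+1 = k+2 by ring] at this
    rw [this]
    exact hw.1 h2
  have e2 : D.fn (w x) = GW w (k+1) (w x) := D.fn_eq (n := k+1) (x := w x)
    (by rw [hDp]; exact hw1) (by rw [hDp, show k+1+1 = k+2 by ring]; exact hw2)
  rw [e1, e2, GW, GW]
  have h0 : (w ^ (-(k+1))) (w x) = (w ^ (-k)) x := by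
    rw [← Equiv.Perm.mul_apply]
    congr 1
    rw [show -k = -(k+1)+1 by ring, zpow_add_one]
  rw [h0]
  push_cast
  ring

/-- Any fixed-point-free increasing `Good` permutation is conjugate to the translation. -/
theorem conj_translation (hw : Good w) (hfpf : ∀ x, x < w x) :
    ∃ χ : Equiv.Perm ℝ, Good χ ∧ χ * w * χ⁻¹ = Tp := by
  set D := chiData hw hfpf with hD
  refine ⟨mkPerm D.fn D.fn_mono D.fn_surj, ⟨by rw [mkPerm_apply]; exact D.fn_mono,
    by rw [mkPerm_apply]; exact D.fn_locfin⟩, ?_⟩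
  set χ := mkPerm D.fn D.fn_mono D.fn_surj with hχ
  have key : χ * w = Tp * χ := by
    apply Equiv.ext
    intro x
    have h1 : (χ * w) x = D.fn (w x) := by
      simp [Equiv.Perm.mul_apply, hχ]
    have h2 : (Tp * χ) x = D.fn x + 1 := by
      simp only [Equiv.Perm.mul_apply, hχ, mkPerm_apply, Tp_apply]
    rw [h1, h2, chi_shift hw hfpf]
  calc χ * w * χ⁻¹ = (Tp * χ) * χ⁻¹ := by rw [key]
  _ = Tp := by group

end Chi

theorem perm_tb {P : Equiv.Perm ℝ} (h : StrictMono ⇑P) : Tendsto ⇑P atBot atBot := by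
  apply tendsto_atBot.mpr
  intro b
  apply eventually_atBot.mpr
  refine ⟨P⁻¹ b, fun x hx => ?_⟩
  have := h.monotone hx
  rwa [show ∀ z, P (P⁻¹ z) = z from P.apply_symm_apply] at this

theorem perm_tt {P : Equiv.Perm ℝ} (h : StrictMono ⇑P) : Tendsto ⇑P atTop atTop := by
  apply tendsto_atTop.mpr
  intro b
  apply eventually_atTop.mpr
  refine ⟨P⁻¹ b, fun x hx => ?_⟩
  have := h.monotone hx
  rwa [show ∀ z, P (P⁻¹ z) = z from P.apply_symm_apply] at this

section Interp
variable (f : Equiv.Perm ℝ) (hGf : Good f)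

noncomputable def Yn : ℤ → ℝ := fun n => max (n : ℝ) (f ((n : ℝ) + 1)) + 1
noncomputable def pI : ℤ → ℝ := fun n => (n : ℝ)
noncomputable def sI : ℤ → ℝ := fun n => Yn f (n + 1) - Yn f n

variable {f}

include hGf in
theorem Yn_mono : StrictMono (Yn f) := by
  apply strictMono_int_of_lt_succ
  intro n
  apply add_lt_add_left
  apply max_lt_max
  · exact_mod_cast (by omega : n < n + 1)
  · apply hGf.1
    push_cast
    linarith

include hGf in
theorem Yn_tt : Tendsto (Yn f) atTop atTop := by
  apply tendsto_top_of_lb (Yn f) 0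
  intro n
  have := le_max_left ((n:ℝ)) (f ((n:ℝ)+1))
  rw [Yn]
  linarith

include hGf in
theorem Yn_tb : Tendsto (Yn f) atBot atBot := by
  have h1 : Tendsto (fun n : ℤ => ((n : ℝ))) atBot atBot := tendsto_intCast_atBot_iff.2 tendsto_id
  have h2 : Tendsto (fun n : ℤ => f ((n : ℝ) + 1)) atBot atBot := by
    apply (perm_tb hGf.1).comp
    exact tendsto_atBot_add_const_right atBot 1 h1
  have h3 : Tendsto (fun n : ℤ => max ((n:ℝ)) (f ((n:ℝ)+1))) atBot atBot := by
    apply tendsto_atBot.mpr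
    intro b
    filter_upwards [tendsto_atBot.mp h1 b, tendsto_atBot.mp h2 b] with n hn1 hn2
    exact max_le hn1 hn2
  exact tendsto_atBot_add_const_right atBot 1 h3

noncomputable def UD (hGf : Good f) : GlueData :=
  affineGlue (pI) (Yn f) (sI f)
    (fun a b h => by simp only [pI]; exact_mod_cast h)
    (Yn_mono hGf)
    (tendsto_top_of_lb pI 0 (fun n => by simp only [pI]; norm_num))
    (by rw [show pI = (fun n : ℤ => ((n:ℝ))) from rfl]
        exact tendsto_intCast_atBot_iff.2 tendsto_id)
    (Yn_tt hGf) (Yn_tb hGf)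
    (fun n => sub_pos.mpr ((Yn_mono hGf) (by omega)))
    (fun n => by
      rw [sI, pI, pI]
      push_cast
      ring)

theorem UD_dom (hGf : Good f) : ∀ x : ℝ, f x < (UD hGf).fn x ∧ x < (UD hGf).fn x := by
  intro x
  set D := UD hGf with hD
  have hDp : D.p = pI := rfl
  have hDG : D.G = fun n x => Yn f n + sI f n * (x - pI n) := rfl
  obtain ⟨n, h1, h2⟩ := ex_block D.p (D.hpbot) (D.hptop) x
  have e := D.fn_eq (n := n) (x := x) h1 h2
  rw [hDp, pI] at h1
  rw [hDp, pI] at h2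
  have hcast : ((n+1:ℤ):ℝ) = (n:ℝ) + 1 := by push_cast; ring
  rw [hcast] at h2
  have hge : Yn f n ≤ D.fn x := by
    rw [e, hDG]
    dsimp only
    have hs : 0 ≤ sI f n := (sub_pos.mpr ((Yn_mono hGf) (by omega))).le
    rw [pI]
    nlinarith
  have hfx : f x < Yn f n := by
    have hlt : f x < f ((n:ℝ)+1) := hGf.1 h2
    have := le_max_right ((n:ℝ)) (f ((n:ℝ)+1))
    rw [Yn]
    linarith
  have hx : x < Yn f n := by
    have := le_max_left ((n:ℝ)) (f ((n:ℝ)+1))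
    rw [Yn]
    linarith
  exact ⟨lt_of_lt_of_le hfx hge, lt_of_lt_of_le hx hge⟩

end Interp


theorem Afun_mono : StrictMono Afun := AD.fn_mono
theorem Afun_surj : Function.Surjective Afun := AD.fn_surj
theorem Afun_locfin : LocFin Afun := AD.fn_locfin
theorem Kfun_mono : StrictMono Kfun := KD.fn_mono
theorem Kfun_surj : Function.Surjective Kfun := KD.fn_surj
theorem Kfun_locfin : LocFin Kfun := KD.fn_locfin

noncomputable def Up (f : Equiv.Perm ℝ) (hGf : Good f) : Equiv.Perm ℝ :=
  mkPerm (UD hGf).fn (UD hGf).fn_mono (UD hGf).fn_surj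

theorem Up_good (f : Equiv.Perm ℝ) (hGf : Good f) : Good (Up f hGf) :=
  ⟨by rw [Up, mkPerm_apply]; exact (UD hGf).fn_mono,
   by rw [Up, mkPerm_apply]; exact (UD hGf).fn_locfin⟩

theorem Up_dom (f : Equiv.Perm ℝ) (hGf : Good f) :
    ∀ x : ℝ, f x < (Up f hGf) x ∧ x < (Up f hGf) x := by
  intro x
  have h : ⇑(Up f hGf) = (UD hGf).fn := by rw [Up, mkPerm_apply]
  rw [h]
  exact UD_dom hGf x


noncomputable def Ap : Equiv.Perm ℝ := mkPerm Afun Afun_mono Afun_surj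
noncomputable def Kp : Equiv.Perm ℝ := mkPerm Kfun Kfun_mono Kfun_surj
noncomputable def Cp : Equiv.Perm ℝ := Ap⁻¹ * Tp

theorem good_Ap : Good Ap := ⟨by rw [Ap, mkPerm_apply]; exact Afun_mono,
  by rw [Ap, mkPerm_apply]; exact Afun_locfin⟩
theorem good_Kp : Good Kp := ⟨by rw [Kp, mkPerm_apply]; exact Kfun_mono,
  by rw [Kp, mkPerm_apply]; exact Kfun_locfin⟩
theorem good_Cp : Good Cp := (good_Ap.inv).mul good_Tp

theorem EA_perm : Ap * (Tp * Tp) * Ap = Tp * Tp := by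
  apply Equiv.ext
  intro x
  have h1 : (Ap * (Tp * Tp) * Ap) x = Afun (Afun x + 1 + 1) := by
    simp [Equiv.Perm.mul_apply, Ap, Tp_apply]
  have h2 : (Tp * Tp) x = x + 1 + 1 := by
    simp [Equiv.Perm.mul_apply, Tp_apply]
  rw [h1, h2, show Afun x + 1 + 1 = Afun x + 2 by ring, EA x]
  ring

theorem EK_perm : Ap * Kp * Tp⁻¹ * Ap = Tp * Kp := by
  apply Equiv.ext
  intro y
  have h1 : (Ap * Kp * Tp⁻¹ * Ap) y = Afun (Kfun (Afun y - 1)) := by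
    simp [Equiv.Perm.mul_apply, Ap, Kp, Tp_inv_apply]
  have h2 : (Tp * Kp) y = Kfun y + 1 := by
    simp [Equiv.Perm.mul_apply, Kp, Tp_apply]
  rw [h1, h2, EK y]

theorem conjA : (Tp * Tp)⁻¹ * Ap * ((Tp * Tp)⁻¹)⁻¹ = Ap⁻¹ := by
  rw [inv_inv]
  have h1 : Ap * (Tp * Tp) = (Tp * Tp) * Ap⁻¹ := by
    have h := congrArg (fun z => z * Ap⁻¹) EA_perm
    simpa [mul_assoc] using h
  calc (Tp * Tp)⁻¹ * Ap * (Tp * Tp) = (Tp * Tp)⁻¹ * (Ap * (Tp * Tp)) := by rw [mul_assoc]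
  _ = (Tp * Tp)⁻¹ * ((Tp * Tp) * Ap⁻¹) := by rw [h1]
  _ = Ap⁻¹ := by group

theorem conj_inv_of {H X : Equiv.Perm ℝ} (h : H * X * H⁻¹ = X⁻¹) :
    H * X⁻¹ * H⁻¹ = (X⁻¹)⁻¹ := by
  have h2 : (H * X * H⁻¹)⁻¹ = (X⁻¹)⁻¹ := congrArg (fun z => z⁻¹) h
  simp only [mul_inv_rev, inv_inv] at h2
  rw [inv_inv, mul_assoc]
  exact h2

theorem conjA' : (Tp * Tp)⁻¹ * Ap⁻¹ * ((Tp * Tp)⁻¹)⁻¹ = (Ap⁻¹)⁻¹ :=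
  conj_inv_of conjA

theorem key_main : Tp⁻¹ * Ap * Kp = Kp * (Ap⁻¹ * Tp) := by
  have h := congrArg (fun z => Tp⁻¹ * z * (Ap⁻¹ * Tp)) EK_perm
  simp only [mul_assoc] at h
  calc Tp⁻¹ * Ap * Kp
      = Tp⁻¹ * (Ap * (Kp * (Tp⁻¹ * (Ap * (Ap⁻¹ * Tp))))) := by group
  _ = Tp⁻¹ * (Tp * (Kp * (Ap⁻¹ * Tp))) := h
  _ = Kp * (Ap⁻¹ * Tp) := by group

theorem conjCinv : Kp⁻¹ * Cp⁻¹ * (Kp⁻¹)⁻¹ = (Cp⁻¹)⁻¹ := by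
  rw [inv_inv, inv_inv]
  have hC : Cp⁻¹ = Tp⁻¹ * Ap := by rw [Cp]; group
  rw [hC]
  calc Kp⁻¹ * (Tp⁻¹ * Ap) * Kp = Kp⁻¹ * (Tp⁻¹ * Ap * Kp) := by group
  _ = Kp⁻¹ * (Kp * (Ap⁻¹ * Tp)) := by rw [key_main]
  _ = Ap⁻¹ * Tp := by group
  _ = Cp := by rw [Cp]

theorem conjC : Kp⁻¹ * Cp * (Kp⁻¹)⁻¹ = Cp⁻¹ := by
  have h := conj_inv_of conjCinv
  simp only [inv_inv] at h ⊢
  exact h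

theorem AC : Ap * Cp = Tp := by rw [Cp]; group

theorem rev_clause {X H χ : Equiv.Perm ℝ} (hX : Good X) (hH : Good H) (hχ : Good χ)
    (hrel : H * X * H⁻¹ = X⁻¹) :
    InPL (χ⁻¹ * X * χ) ∧ StrictMono ⇑(χ⁻¹ * X * χ) ∧
      ∃ h : Equiv.Perm ℝ, InPL h ∧ StrictMono ⇑h ∧
        h * (χ⁻¹ * X * χ) * h⁻¹ = (χ⁻¹ * X * χ)⁻¹ := by
  have hg : Good (χ⁻¹ * X * χ) := (hχ.inv.mul hX).mul hχ
  refine ⟨hg.inPL, hg.1, χ⁻¹ * H * χ, ((hχ.inv.mul hH).mul hχ).inPL,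
    ((hχ.inv.mul hH).mul hχ).1, ?_⟩
  have h1 : (χ⁻¹ * H * χ) * (χ⁻¹ * X * χ) * (χ⁻¹ * H * χ)⁻¹
      = χ⁻¹ * (H * X * H⁻¹) * χ := by group
  rw [h1, hrel]
  group

end PL4

/-- PL⁺(ℝ) = R₄(PL⁺(ℝ)): every element of PL⁺(ℝ) is a composite of four elements of
PL⁺(ℝ), each reversible in PL⁺(ℝ). -/
theorem stmt_3 (f : Equiv.Perm ℝ) (hf : InPL f) (hfm : StrictMono (⇑f)) :
    ∃ g₁ g₂ g₃ g₄ : Equiv.Perm ℝ,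
      (InPL g₁ ∧ StrictMono (⇑g₁) ∧
        ∃ h : Equiv.Perm ℝ, InPL h ∧ StrictMono (⇑h) ∧ h * g₁ * h⁻¹ = g₁⁻¹) ∧
      (InPL g₂ ∧ StrictMono (⇑g₂) ∧
        ∃ h : Equiv.Perm ℝ, InPL h ∧ StrictMono (⇑h) ∧ h * g₂ * h⁻¹ = g₂⁻¹) ∧
      (InPL g₃ ∧ StrictMono (⇑g₃) ∧
        ∃ h : Equiv.Perm ℝ, InPL h ∧ StrictMono (⇑h) ∧ h * g₃ * h⁻¹ = g₃⁻¹) ∧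
      (InPL g₄ ∧ StrictMono (⇑g₄) ∧
        ∃ h : Equiv.Perm ℝ, InPL h ∧ StrictMono (⇑h) ∧ h * g₄ * h⁻¹ = g₄⁻¹) ∧
      f = g₁ * g₂ * g₃ * g₄ := by
  classical
  open PL4 in
  -- the increasing PL structure of f
  have hGf : PL4.Good f := ⟨hfm, PL4.locfin_of_inPL hf⟩
  set u : Equiv.Perm ℝ := PL4.Up f hGf with hu
  have hGu : PL4.Good u := PL4.Up_good f hGf
  have hdom := PL4.Up_dom f hGf
  set v : Equiv.Perm ℝ := u⁻¹ * f with hv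
  have hGv : PL4.Good v := (hGu.inv).mul hGf
  have hufpf : ∀ x : ℝ, x < u x := fun x => (hdom x).2
  have hvlt : ∀ x : ℝ, v x < x := by
    intro x
    have h1 : v x = u⁻¹ (f x) := rfl
    rw [h1]
    have h2 : f x < u x := (hdom x).1
    have h3 : u⁻¹ (f x) < u⁻¹ (u x) := (PL4.sm_inv hGu.1) h2
    rwa [show ∀ z, u⁻¹ (u z) = z from u.symm_apply_apply] at h3
  have hvfpf : ∀ x : ℝ, x < v⁻¹ x := by
    intro x
    have := hvlt (v⁻¹ x)
    rwa [show ∀ z, v (v⁻¹ z) = z from v.apply_symm_apply] at this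
  obtain ⟨χ₁, hGχ₁, hχ₁⟩ := PL4.conj_translation hGu hufpf
  obtain ⟨χ₂, hGχ₂, hχ₂⟩ := PL4.conj_translation (hGv.inv) hvfpf
  refine ⟨χ₁⁻¹ * PL4.Ap * χ₁, χ₁⁻¹ * PL4.Cp * χ₁, χ₂⁻¹ * PL4.Cp⁻¹ * χ₂, χ₂⁻¹ * PL4.Ap⁻¹ * χ₂,
    PL4.rev_clause PL4.good_Ap ((PL4.good_Tp.mul PL4.good_Tp).inv) hGχ₁ PL4.conjA,
    PL4.rev_clause PL4.good_Cp (PL4.good_Kp.inv) hGχ₁ PL4.conjC,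
    PL4.rev_clause (PL4.good_Cp.inv) (PL4.good_Kp.inv) hGχ₂ PL4.conjCinv,
    PL4.rev_clause (PL4.good_Ap.inv) ((PL4.good_Tp.mul PL4.good_Tp).inv) hGχ₂ PL4.conjA',
    ?_⟩
  -- product identity
  have hstep : (χ₁⁻¹ * PL4.Ap * χ₁) * (χ₁⁻¹ * PL4.Cp * χ₁) * ((χ₂⁻¹ * PL4.Cp⁻¹ * χ₂) *
      (χ₂⁻¹ * PL4.Ap⁻¹ * χ₂))
      = (χ₁⁻¹ * (PL4.Ap * PL4.Cp) * χ₁) * (χ₂⁻¹ * (PL4.Ap * PL4.Cp)⁻¹ * χ₂) := by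
    group
  have h1 : χ₁⁻¹ * PL4.Tp * χ₁ = u := by rw [← hχ₁]; group
  have h2 : χ₂⁻¹ * PL4.Tp⁻¹ * χ₂ = v := by
    have h3 : χ₂⁻¹ * PL4.Tp * χ₂ = v⁻¹ := by rw [← hχ₂]; group
    have h4 := congrArg (fun z => z⁻¹) h3
    simp only [mul_inv_rev, inv_inv] at h4
    rw [← mul_assoc] at h4
    exact h4
  rw [mul_assoc (χ₁⁻¹ * PL4.Ap * χ₁ * (χ₁⁻¹ * PL4.Cp * χ₁)), hstep, PL4.AC, h1, h2, hv]
  group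
end

section
/- Every element of PL(ℝ) can be written as a composite of two elements of PL(ℝ), each of which is reversible in PL(ℝ) (i.e., each is conjugated to its inverse by some element of PL(ℝ)). In other words, PL(ℝ) = R₂(PL(ℝ)). -/
open Filter Set

/-- A set with no accumulation points. -/
def AccFree (S : Set ℝ) : Prop := ∀ x : ℝ, ¬ AccPt x (Filter.principal S)

lemma AccFree.mono {S T : Set ℝ} (hT : AccFree T) (hST : S ⊆ T) : AccFree S := fun x hx =>
  hT x (hx.mono (Filter.principal_mono.2 hST))

lemma AccFree.union {S T : Set ℝ} (hS : AccFree S) (hT : AccFree T) : AccFree (S ∪ T) := by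
  intro x hx
  rw [← Filter.sup_principal, accPt_sup] at hx
  rcases hx with h | h
  · exact hS x h
  · exact hT x h

lemma AccFree.finite {S : Set ℝ} (hS : S.Finite) : AccFree S := by
  intro x hx
  have hcl : IsClosed (S \ {x}) := (hS.subset Set.diff_subset).isClosed
  have hU : (S \ {x})ᶜ ∈ nhds x := hcl.isOpen_compl.mem_nhds (by simp)
  rcases accPt_iff_nhds.1 hx _ hU with ⟨y, ⟨hy1, hy2⟩, hy3⟩
  exact hy1 ⟨hy2, hy3⟩

lemma accFree_of_locally {S : Set ℝ}
    (h : ∀ x : ℝ, ∃ U ∈ nhds x, ∃ T : Set ℝ, AccFree T ∧ U ∩ S ⊆ T) : AccFree S := by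
  intro x hx
  rcases h x with ⟨U, hU, T, hT, hsub⟩
  apply hT x
  refine Filter.NeBot.mono hx (le_inf inf_le_left ?_)
  calc nhdsWithin x {x}ᶜ ⊓ Filter.principal S
      ≤ Filter.principal U ⊓ Filter.principal S :=
        inf_le_inf_right _ (le_trans nhdsWithin_le_nhds (Filter.le_principal_iff.2 hU))
    _ = Filter.principal (U ∩ S) := Filter.inf_principal
    _ ≤ Filter.principal T := Filter.principal_mono.2 hsub

lemma AccFree.image {S : Set ℝ} (hS : AccFree S) (f : Equiv.Perm ℝ) (hf : Continuous f.symm) :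
    AccFree (⇑f '' S) := by
  intro x hx
  apply hS (f.symm x)
  have := hx.map (f := ⇑f.symm) hf.continuousAt f.symm.injective
  rwa [Filter.map_principal, Equiv.symm_image_image] at this

lemma IsLocallyAffineAt.congr {f g : ℝ → ℝ} {x : ℝ} (hf : IsLocallyAffineAt f x)
    (h : g =ᶠ[nhds x] f) : IsLocallyAffineAt g x := by
  obtain ⟨a, b, hab⟩ := hf
  exact ⟨a, b, (h.and hab).mono fun y hy => hy.1.trans hy.2⟩

lemma isLocallyAffineAt_affine (a b x : ℝ) : IsLocallyAffineAt (fun y => a * y + b) x :=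
  ⟨a, b, Eventually.of_forall fun _ => rfl⟩

lemma isLocallyAffineAt_id (x : ℝ) : IsLocallyAffineAt id x :=
  ⟨1, 0, Eventually.of_forall fun y => by simp⟩

/-- Composition of locally affine maps, given continuity of the inner map. -/
lemma IsLocallyAffineAt.comp {f g : ℝ → ℝ} {x : ℝ}
    (hf : IsLocallyAffineAt f (g x)) (hg : IsLocallyAffineAt g x)
    (hgc : ContinuousAt g x) : IsLocallyAffineAt (f ∘ g) x := by
  obtain ⟨a, b, hab⟩ := hf
  obtain ⟨c, d, hcd⟩ := hg
  have h1 : ∀ᶠ y in nhds x, f (g y) = a * g y + b := hgc.tendsto.eventually hab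
  refine ⟨a * c, a * d + b, (h1.and hcd).mono fun y ⟨hy1, hy2⟩ => ?_⟩
  rw [Function.comp_apply, hy1, hy2]; ring

/-- The slope of an injective map at a point of local affinity is nonzero. -/
lemma IsLocallyAffineAt.inv {f : Equiv.Perm ℝ} {y : ℝ}
    (hf : IsLocallyAffineAt f (f.symm y)) (hc : Continuous f.symm) :
    IsLocallyAffineAt f.symm y := by
  obtain ⟨a, b, hab⟩ := hf
  have ha : a ≠ 0 := by
    rintro rfl
    obtain ⟨ε, hε, hball⟩ := Metric.eventually_nhds_iff.1 hab
    have h1 : f (f.symm y) = 0 * f.symm y + b := hball (by simp [hε])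
    have h2 : f (f.symm y + ε/2) = 0 * (f.symm y + ε/2) + b := by
      apply hball
      have he : f.symm y + ε/2 - f.symm y = ε/2 := by ring
      rw [Real.dist_eq, he, abs_of_pos (by linarith)]
      linarith
    have h3 : f (f.symm y) = f (f.symm y + ε/2) := by rw [h1, h2]; ring
    have := f.injective h3
    linarith
  have h2 : ∀ᶠ z in nhds y, f (f.symm z) = a * f.symm z + b :=
    (hc.continuousAt.tendsto.eventually hab)
  refine ⟨a⁻¹, -b/a, h2.mono fun z hz => ?_⟩
  have : z = a * f.symm z + b := by simpa using hz
  field_simp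
  linarith [this]

/-! ### InPL closure lemmas -/

lemma NAset_subset_mul (f g : Equiv.Perm ℝ) (hg : Continuous ⇑g) :
    {x : ℝ | ¬ IsLocallyAffineAt (⇑(f * g)) x} ⊆
      {x : ℝ | ¬ IsLocallyAffineAt (⇑g) x} ∪ (⇑g.symm '' {y : ℝ | ¬ IsLocallyAffineAt (⇑f) y}) := by
  intro x hx
  by_contra hc
  simp only [Set.mem_union, Set.mem_setOf_eq, Set.mem_image, not_or, not_exists] at hc hx
  push_neg at hc
  obtain ⟨hg2, hf2⟩ := hc
  have hfx : IsLocallyAffineAt (⇑f) (g x) := by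
    by_contra hfc
    exact hf2 (g x) hfc (by simp)
  exact hx ((hfx.comp hg2 hg.continuousAt).congr (Filter.Eventually.of_forall fun y => by simp))

lemma InPL.mul {f g : Equiv.Perm ℝ} (hf : InPL f) (hg : InPL g) : InPL (f * g) := by
  obtain ⟨⟨hfc, hfc'⟩, hfa⟩ := hf
  obtain ⟨⟨hgc, hgc'⟩, hga⟩ := hg
  constructor
  · constructor
    · have : ⇑(f * g) = ⇑f ∘ ⇑g := rfl
      rw [this]; exact hfc.comp hgc
    · have : ⇑(f * g).symm = ⇑g.symm ∘ ⇑f.symm := rfl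
      rw [this]; exact hgc'.comp hfc'
  · intro x
    have h1 : AccFree {x : ℝ | ¬ IsLocallyAffineAt (⇑g) x} := hga
    have h2 : AccFree (⇑g.symm '' {y : ℝ | ¬ IsLocallyAffineAt (⇑f) y}) := by
      apply AccFree.image hfa g.symm
      simpa using hgc
    exact (h1.union h2).mono (NAset_subset_mul f g hgc) x

lemma InPL.inv {f : Equiv.Perm ℝ} (hf : InPL f) : InPL f⁻¹ := by
  obtain ⟨⟨hfc, hfc'⟩, hfa⟩ := hf
  have hcoe : ⇑f⁻¹ = ⇑f.symm := rfl
  have hcoe' : ⇑(f⁻¹).symm = ⇑f := rfl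
  constructor
  · exact ⟨by rw [hcoe]; exact hfc', by rw [hcoe']; exact hfc⟩
  · have hsub : {y : ℝ | ¬ IsLocallyAffineAt (⇑f⁻¹) y} ⊆
        ⇑f '' {x : ℝ | ¬ IsLocallyAffineAt (⇑f) x} := by
      intro y hy
      simp only [Set.mem_setOf_eq, hcoe] at hy
      refine ⟨f.symm y, ?_, by simp⟩
      simp only [Set.mem_setOf_eq]
      intro hla
      exact hy (hla.inv hfc')
    exact (AccFree.image hfa f (by simpa using hfc')).mono hsub

lemma inPL_one : InPL 1 := by
  constructor
  · exact ⟨continuous_id, continuous_id⟩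
  · intro x
    have : {y : ℝ | ¬ IsLocallyAffineAt (⇑(1 : Equiv.Perm ℝ)) y} = ∅ := by
      ext y; simp only [Set.mem_setOf_eq, Set.mem_empty_iff_false, iff_false, not_not]
      exact ⟨1, 0, Filter.Eventually.of_forall fun z => by simp⟩
    rw [this]
    exact AccFree.finite Set.finite_empty x

lemma InPL.zpow {f : Equiv.Perm ℝ} (hf : InPL f) (n : ℤ) : InPL (f ^ n) := by
  have hone : InPL 1 := inPL_one
  have hpow : ∀ m : ℕ, InPL (f ^ m) := by
    intro m
    induction m with
    | zero => simpa using hone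
    | succ k ih => rw [pow_succ]; exact ih.mul hf
  rcases n with m | m
  · simpa using hpow m
  · rw [Int.negSucc_eq, zpow_neg]
    exact (by simpa using hpow (m+1) : InPL (f ^ (m+1) : Equiv.Perm ℝ)).inv

/-- The affine permutation `x ↦ a x + b`, `a ≠ 0`. -/
noncomputable def affinePerm (a b : ℝ) (ha : a ≠ 0) : Equiv.Perm ℝ where
  toFun x := a * x + b
  invFun y := (y - b) / a
  left_inv x := by field_simp; ring
  right_inv y := by field_simp; ring

lemma inPL_affinePerm (a b : ℝ) (ha : a ≠ 0) : InPL (affinePerm a b ha) := by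
  constructor
  · constructor
    · show Continuous fun x : ℝ => a * x + b
      fun_prop
    · show Continuous fun y : ℝ => (y - b) / a
      fun_prop
  · intro x
    have : {y : ℝ | ¬ IsLocallyAffineAt (⇑(affinePerm a b ha)) y} = ∅ := by
      ext y; simp only [Set.mem_setOf_eq, Set.mem_empty_iff_false, iff_false, not_not]
      exact isLocallyAffineAt_affine a b y
    rw [this]
    exact AccFree.finite Set.finite_empty x

/-! ### The gluing gadget -/

lemma exists_int_between {u : ℤ → ℝ} (hu : StrictMono u)
    (hbot : ∀ c : ℝ, ∃ n : ℤ, u n ≤ c) (htop : ∀ c : ℝ, ∃ n : ℤ, c < u n) (x : ℝ) :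
    ∃ n : ℤ, u n ≤ x ∧ x < u (n + 1) := by
  obtain ⟨m, hm⟩ := htop x
  have hbdd : ∃ b : ℤ, ∀ k : ℤ, u k ≤ x → k ≤ b := by
    refine ⟨m, fun k hk => ?_⟩
    by_contra hc
    push_neg at hc
    exact absurd (le_trans (hu hc).le hk) (not_le.2 hm)
  obtain ⟨n, hn1, hn2⟩ := Int.exists_greatest_of_bdd hbdd (hbot x)
  refine ⟨n, hn1, ?_⟩
  by_contra hc
  push_neg at hc
  exact absurd (hn2 (n+1) hc) (by omega)

/-- Data for gluing a ℤ-indexed family of monotone pieces into a map of ℝ. -/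
structure Glue where
  z : ℤ → ℝ
  w : ℤ → ℝ
  F : ℤ → ℝ → ℝ
  hz : StrictMono z
  hzbot : ∀ c : ℝ, ∃ n : ℤ, z n ≤ c
  hztop : ∀ c : ℝ, ∃ n : ℤ, c < z n
  hw : StrictMono w
  hwbot : ∀ c : ℝ, ∃ n : ℤ, w n ≤ c
  hwtop : ∀ c : ℝ, ∃ n : ℤ, c < w n
  hF0 : ∀ n : ℤ, F n (z n) = w n
  hF1 : ∀ n : ℤ, F n (z (n+1)) = w (n+1)
  hFmono : ∀ n : ℤ, StrictMonoOn (F n) (Set.Icc (z n) (z (n+1)))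
  hFcont : ∀ n : ℤ, ContinuousOn (F n) (Set.Icc (z n) (z (n+1)))

namespace Glue

variable (G : Glue)

lemma exists_idx (x : ℝ) : ∃ n : ℤ, G.z n ≤ x ∧ x < G.z (n + 1) :=
  exists_int_between G.hz G.hzbot G.hztop x

noncomputable def idx (x : ℝ) : ℤ := (G.exists_idx x).choose

lemma idx_le (x : ℝ) : G.z (G.idx x) ≤ x := (G.exists_idx x).choose_spec.1

lemma lt_idx (x : ℝ) : x < G.z (G.idx x + 1) := (G.exists_idx x).choose_spec.2

lemma idx_unique {n : ℤ} {x : ℝ} (h1 : G.z n ≤ x) (h2 : x < G.z (n+1)) : G.idx x = n := by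
  by_contra hc
  rcases lt_or_gt_of_ne hc with h | h
  · have : G.idx x + 1 ≤ n := by omega
    exact absurd (le_trans (G.hz.le_iff_le.2 this) h1) (not_le.2 (G.lt_idx x))
  · have : n + 1 ≤ G.idx x := by omega
    exact absurd (le_trans (G.hz.le_iff_le.2 this) (G.idx_le x)) (not_le.2 h2)

noncomputable def toFun (x : ℝ) : ℝ := G.F (G.idx x) x

lemma piece {n : ℤ} {x : ℝ} (h1 : G.z n ≤ x) (h2 : x < G.z (n+1)) : G.toFun x = G.F n x := by
  rw [toFun, G.idx_unique h1 h2]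

lemma apply_z (n : ℤ) : G.toFun (G.z n) = G.w n := by
  rw [G.piece le_rfl (G.hz (by omega)), G.hF0]

lemma mem_Icc_self (x : ℝ) : x ∈ Set.Icc (G.z (G.idx x)) (G.z (G.idx x + 1)) :=
  ⟨G.idx_le x, (G.lt_idx x).le⟩

lemma toFun_lt_w (x : ℝ) : G.toFun x < G.w (G.idx x + 1) := by
  rw [toFun, ← G.hF1 (G.idx x)]
  exact G.hFmono _ (G.mem_Icc_self x) (Set.right_mem_Icc.2 (G.hz (by omega)).le) (G.lt_idx x)

lemma w_le_toFun (x : ℝ) : G.w (G.idx x) ≤ G.toFun x := by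
  rw [toFun, ← G.hF0 (G.idx x)]
  rcases eq_or_lt_of_le (G.idx_le x) with h | h
  · rw [h]
  · exact (G.hFmono _ (Set.left_mem_Icc.2 (G.hz (by omega)).le) (G.mem_Icc_self x) h).le

lemma strictMono : StrictMono G.toFun := by
  intro x y hxy
  set m := G.idx x with hm
  set n := G.idx y with hn
  have hmn : m ≤ n := by
    by_contra hc
    push_neg at hc
    have h1 : G.z (n+1) ≤ G.z m := G.hz.le_iff_le.2 (by omega)
    exact absurd (lt_of_le_of_lt (h1.trans (G.idx_le x)) (lt_trans hxy (G.lt_idx y)))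
      (lt_irrefl _)
  rcases eq_or_lt_of_le hmn with h | h
  · have hy2 : y < G.z (m+1) := by rw [h]; exact G.lt_idx y
    have hy1 : G.z m ≤ y := le_of_lt (lt_of_le_of_lt (G.idx_le x) hxy)
    rw [show G.toFun x = G.F m x from rfl, G.piece hy1 hy2]
    exact G.hFmono m (G.mem_Icc_self x) ⟨hy1, hy2.le⟩ hxy
  · calc G.toFun x < G.w (m + 1) := G.toFun_lt_w x
      _ ≤ G.w n := G.hw.le_iff_le.2 (by omega)
      _ ≤ G.toFun y := G.w_le_toFun y

lemma surjective : Function.Surjective G.toFun := by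
  intro y
  obtain ⟨n, hn1, hn2⟩ := exists_int_between G.hw G.hwbot G.hwtop y
  have hle : G.z n ≤ G.z (n+1) := (G.hz (by omega)).le
  have := intermediate_value_Icc hle (G.hFcont n)
  rw [G.hF0, G.hF1] at this
  obtain ⟨x, hx, hfx⟩ := this ⟨hn1, hn2.le⟩
  refine ⟨x, ?_⟩
  have hxlt : x < G.z (n+1) := by
    rcases eq_or_lt_of_le hx.2 with h | h
    · exfalso
      rw [h, G.hF1] at hfx
      exact absurd hfx (ne_of_gt hn2)
    · exact h
  rw [G.piece hx.1 hxlt, hfx]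

noncomputable def toPerm : Equiv.Perm ℝ :=
  (StrictMono.orderIsoOfSurjective G.toFun G.strictMono G.surjective).toEquiv

lemma coe_toPerm : ⇑G.toPerm = G.toFun := rfl

lemma isHomeo_toPerm : IsHomeo G.toPerm := by
  constructor
  · exact (StrictMono.orderIsoOfSurjective G.toFun G.strictMono G.surjective).continuous
  · exact (StrictMono.orderIsoOfSurjective G.toFun G.strictMono G.surjective).symm.continuous

lemma la_of_la_piece {m : ℤ} {y : ℝ} (h1 : G.z m < y) (h2 : y < G.z (m+1))
    (hla : IsLocallyAffineAt (G.F m) y) : IsLocallyAffineAt G.toFun y := by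
  apply hla.congr
  exact Filter.eventually_of_mem (Ioo_mem_nhds h1 h2) fun t ht => G.piece ht.1.le ht.2

lemma accFree_NA (hNA : ∀ n : ℤ, AccFree {x : ℝ | ¬ IsLocallyAffineAt (G.F n) x}) :
    AccFree {x : ℝ | ¬ IsLocallyAffineAt G.toFun x} := by
  apply accFree_of_locally
  intro x
  set n := G.idx x with hn
  have e1 : n - 1 + 1 = n := by ring
  have e2 : n + 1 + 1 = n + 2 := by ring
  refine ⟨Set.Ioo (G.z (n-1)) (G.z (n+2)),
    Ioo_mem_nhds (lt_of_lt_of_le (G.hz (by omega)) (G.idx_le x))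
      (lt_trans (G.lt_idx x) (G.hz (by omega))),
    ({G.z n, G.z (n+1)} : Set ℝ) ∪ ({t : ℝ | ¬ IsLocallyAffineAt (G.F (n-1)) t} ∪
      ({t : ℝ | ¬ IsLocallyAffineAt (G.F n) t} ∪ {t : ℝ | ¬ IsLocallyAffineAt (G.F (n+1)) t})),
    ?_, ?_⟩
  · exact (AccFree.finite ((Set.finite_singleton _).insert _)).union
      ((hNA (n-1)).union ((hNA n).union (hNA (n+1))))
  · rintro y ⟨hyU, hyNA⟩
    simp only [Set.mem_setOf_eq] at hyNA
    by_contra hc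
    simp only [Set.mem_union, Set.mem_insert_iff, Set.mem_singleton_iff, Set.mem_setOf_eq,
      not_or, not_not] at hc
    obtain ⟨⟨hne1, hne2⟩, hla1, hla2, hla3⟩ := hc
    apply hyNA
    rcases lt_trichotomy y (G.z n) with h | h | h
    · refine G.la_of_la_piece (m := n - 1) hyU.1 (by rw [e1]; exact h) hla1
    · exact absurd h hne1
    · rcases lt_trichotomy y (G.z (n+1)) with h' | h' | h'
      · exact G.la_of_la_piece h h' hla2
      · exact absurd h' hne2
      · exact G.la_of_la_piece (m := n+1) h' (by rw [e2]; exact hyU.2) hla3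

end Glue

/-! ### Orbits of fixed-point-free maps -/

lemma strictMono_symm {h : Equiv.Perm ℝ} (hm : StrictMono ⇑h) : StrictMono ⇑h.symm := by
  intro x y hxy
  rcases lt_trichotomy (h.symm x) (h.symm y) with hc | hc | hc
  · exact hc
  · exact absurd (by rw [← h.apply_symm_apply x, ← h.apply_symm_apply y, hc]) (ne_of_lt hxy)
  · exact absurd (by calc y = h (h.symm y) := (h.apply_symm_apply y).symm
      _ < h (h.symm x) := hm hc
      _ = x := h.apply_symm_apply x) (not_lt.2 hxy.le)

lemma strictAnti_symm {h : Equiv.Perm ℝ} (hm : StrictAnti ⇑h) : StrictAnti ⇑h.symm := by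
  intro x y hxy
  rcases lt_trichotomy (h.symm y) (h.symm x) with hc | hc | hc
  · exact hc
  · exact absurd (by rw [← h.apply_symm_apply x, ← h.apply_symm_apply y, hc]) (ne_of_gt hxy)
  · exact absurd (by calc y = h (h.symm y) := (h.apply_symm_apply y).symm
      _ < h (h.symm x) := hm hc
      _ = x := h.apply_symm_apply x : y < x) (not_lt.2 hxy.le)

lemma strictMono_zpow {h : Equiv.Perm ℝ} (hm : StrictMono ⇑h) (n : ℤ) :
    StrictMono ⇑(h ^ n) := by
  have hpow : ∀ m : ℕ, StrictMono ⇑(h ^ (m:ℕ)) := by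
    intro m
    induction m with
    | zero => simpa using strictMono_id
    | succ k ih =>
      rw [pow_succ]
      intro x y hxy
      exact ih (hm hxy)
  rcases n with m | m
  · simpa using hpow m
  · rw [Int.negSucc_eq, zpow_neg]
    have : ⇑((h ^ ((m:ℤ)+1))⁻¹) = ⇑(h ^ ((m:ℤ)+1)).symm := rfl
    rw [this]
    apply strictMono_symm
    have : ((m:ℤ)+1) = ((m+1 : ℕ) : ℤ) := by push_cast; ring
    rw [this, zpow_natCast]
    exact hpow (m+1)

lemma orbit_tendsto_bot {g : Equiv.Perm ℝ} (hgc : Continuous ⇑g) (hglt : ∀ x : ℝ, g x < x)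
    (c x₀ : ℝ) : ∃ n : ℕ, (g ^ n) x₀ ≤ c := by
  set u : ℕ → ℝ := fun n => (g ^ n) x₀ with hu
  have hstep : ∀ n : ℕ, u (n+1) = g (u n) := by
    intro n; simp only [hu, pow_succ']
    rfl
  have hanti : Antitone u := antitone_nat_of_succ_le fun n => by rw [hstep]; exact (hglt _).le
  rcases tendsto_of_antitone hanti with hbot | ⟨L, hL⟩
  · obtain ⟨n, hn⟩ := (Filter.tendsto_atBot.1 hbot c).exists
    exact ⟨n, hn⟩
  · exfalso
    have h1 : Filter.Tendsto (fun n => u (n+1)) Filter.atTop (nhds L) :=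
      hL.comp (Filter.tendsto_add_atTop_nat 1)
    have h3 : Filter.Tendsto (fun n => g (u n)) Filter.atTop (nhds (g L)) :=
      (hgc.continuousAt.tendsto).comp hL
    have h4 : g L = L := tendsto_nhds_unique (by simpa only [← hstep] using h3) h1
    exact absurd h4 (ne_of_lt (hglt L))

lemma orbit_tendsto_top {g : Equiv.Perm ℝ} (hgc : Continuous ⇑g) (hggt : ∀ x : ℝ, x < g x)
    (c x₀ : ℝ) : ∃ n : ℕ, c ≤ (g ^ n) x₀ := by
  set u : ℕ → ℝ := fun n => (g ^ n) x₀ with hu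
  have hstep : ∀ n : ℕ, u (n+1) = g (u n) := by
    intro n; simp only [hu, pow_succ']
    rfl
  have hmono : Monotone u := monotone_nat_of_le_succ fun n => by rw [hstep]; exact (hggt _).le
  rcases tendsto_of_monotone hmono with htop | ⟨L, hL⟩
  · obtain ⟨n, hn⟩ := (Filter.tendsto_atTop.1 htop c).exists
    exact ⟨n, hn⟩
  · exfalso
    have h1 : Filter.Tendsto (fun n => u (n+1)) Filter.atTop (nhds L) :=
      hL.comp (Filter.tendsto_add_atTop_nat 1)
    have h3 : Filter.Tendsto (fun n => g (u n)) Filter.atTop (nhds (g L)) :=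
      (hgc.continuousAt.tendsto).comp hL
    have h4 : g L = L := tendsto_nhds_unique (by simpa only [← hstep] using h3) h1
    exact absurd h4 (ne_of_gt (hggt L))

/-! ### Reversibility of fixed-point-free elements -/

lemma zpow_apply_add {h : Equiv.Perm ℝ} (m n : ℤ) (x : ℝ) :
    (h ^ (m + n)) x = (h ^ m) ((h ^ n) x) := by
  rw [zpow_add]; rfl

lemma reversible_of_lt_id {h : Equiv.Perm ℝ} (hPL : InPL h) (hmono : StrictMono ⇑h)
    (hlt : ∀ x : ℝ, h x < x) :
    ∃ k : Equiv.Perm ℝ, InPL k ∧ k * h * k⁻¹ = h⁻¹ := by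
  obtain ⟨⟨hc, hc'⟩, -⟩ := id hPL
  have hinvgt : ∀ x : ℝ, x < h⁻¹ x := fun x => by
    have := hlt (h⁻¹ x)
    rwa [(by exact Equiv.apply_symm_apply h x : h (h⁻¹ x) = x)] at this
  set d : ℝ := h⁻¹ 0 with hd
  have hdpos : 0 < d := hinvgt 0
  set z : ℤ → ℝ := fun n => (h ^ (-n)) 0 with hzdef
  have hz1 : z 1 = d := by
    simp only [hzdef, zpow_neg, zpow_one]
    exact hd.symm
  have hzstep : ∀ n : ℤ, z (n + 1) = (h ^ (-n)) d := by
    intro n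
    have e : (-(n+1) : ℤ) = -n + -1 := by ring
    simp only [hzdef, e, zpow_apply_add]
    congr 1
  have hzmono : StrictMono z := by
    apply strictMono_int_of_lt_succ
    intro n
    rw [hzstep n]
    exact strictMono_zpow hmono (-n) hdpos
  have hzbot : ∀ c : ℝ, ∃ n : ℤ, z n ≤ c := by
    intro c
    obtain ⟨m, hm⟩ := orbit_tendsto_bot hc hlt c 0
    refine ⟨-m, ?_⟩
    simp only [hzdef, neg_neg]
    rw [zpow_natCast]
    exact hm
  have hztop : ∀ c : ℝ, ∃ n : ℤ, c < z n := by
    intro c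
    have hinvc : Continuous ⇑(h⁻¹) := hc'
    obtain ⟨m, hm⟩ := orbit_tendsto_top hinvc hinvgt (c+1) 0
    have heq : (h⁻¹ ^ (m:ℕ)) = h ^ (-(m:ℤ)) := by
      rw [inv_pow, ← zpow_natCast, ← zpow_neg]
    rw [heq] at hm
    exact ⟨m, by simp only [hzdef]; linarith⟩
  -- the gluing data
  set F : ℤ → ℝ → ℝ := fun n x => 2*(n:ℝ) + 2 * ((h ^ n) x) / d with hFdef
  have hFn0 : ∀ n : ℤ, (h ^ n) (z n) = 0 := by
    intro n
    simp only [hzdef]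
    rw [← zpow_apply_add]
    simp
  have hFn1 : ∀ n : ℤ, (h ^ n) (z (n+1)) = d := by
    intro n
    have e : (-(n+1) : ℤ) = -1 + -n := by ring
    simp only [hzdef, e]
    rw [← zpow_apply_add]
    have e2 : (n + (-1 + -n) : ℤ) = -1 := by ring
    rw [e2, zpow_neg, zpow_one]
  have hFmono : ∀ n : ℤ, StrictMono (F n) := by
    intro n x y hxy
    simp only [hFdef]
    have hxy2 := strictMono_zpow hmono n hxy
    gcongr
  set G : Glue :=
    { z := z
      w := fun n => 2*(n:ℝ)
      F := F
      hz := hzmono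
      hzbot := hzbot
      hztop := hztop
      hw := by
        intro a b hab
        have : (a:ℝ) < (b:ℝ) := by exact_mod_cast hab
        simpa using by linarith
      hwbot := fun c => by
        obtain ⟨n, hn⟩ := exists_int_lt (c/2)
        refine ⟨n, ?_⟩
        show 2*(n:ℝ) ≤ c
        linarith
      hwtop := fun c => by
        obtain ⟨n, hn⟩ := exists_int_gt (c/2)
        refine ⟨n, ?_⟩
        show c < 2*(n:ℝ)
        linarith
      hF0 := fun n => by simp only [hFdef, hFn0 n]; ring
      hF1 := fun n => by simp only [hFdef, hFn1 n]; push_cast; field_simp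
      hFmono := fun n => (hFmono n).strictMonoOn _
      hFcont := fun n => by
        have : Continuous (F n) := by
          have hcn : Continuous ⇑(h ^ n) := ((hPL.zpow n).1).1
          simp only [hFdef]
          fun_prop
        exact this.continuousOn } with hGdef
  set χ : Equiv.Perm ℝ := G.toPerm with hχdef
  have hχapp : ∀ x : ℝ, χ x = G.toFun x := fun x => rfl
  have hχPL : InPL χ := by
    refine ⟨G.isHomeo_toPerm, ?_⟩
    have : AccFree {x : ℝ | ¬ IsLocallyAffineAt G.toFun x} := by
      apply G.accFree_NA
      intro n
      have hacc : AccFree {x : ℝ | ¬ IsLocallyAffineAt (⇑(h ^ n)) x} := (hPL.zpow n).2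
      refine hacc.mono ?_
      intro x hx
      simp only [Set.mem_setOf_eq] at hx ⊢
      intro hla
      apply hx
      obtain ⟨a, b, hab⟩ := hla
      refine ⟨2*a/d, 2*(n:ℝ) + 2*b/d, hab.mono fun y hy => ?_⟩
      show 2*(n:ℝ) + 2 * ((h ^ n) y) / d = 2*a/d * y + (2*(n:ℝ) + 2*b/d)
      rw [hy]
      field_simp
      ring
    exact this
  -- functional equation
  have feq : ∀ x : ℝ, χ (h x) = χ x - 2 := by
    intro x
    set n := G.idx x with hn
    have h1 : G.z n ≤ x := G.idx_le x
    have h2 : x < G.z (n+1) := G.lt_idx x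
    have hzn : ∀ m : ℤ, G.z m = z m := fun m => rfl
    have ha : z (n-1) ≤ h x := by
      have : z (n-1) = h (z n) := by
        have e : (-(n-1) : ℤ) = 1 + -n := by ring
        simp only [hzdef, e, zpow_apply_add, zpow_one]
      rw [this]
      exact (hmono.le_iff_le.2 (by rw [← hzn n]; exact h1))
    have hb : h x < z ((n-1)+1) := by
      have e : ((n-1)+1 : ℤ) = n := by ring
      rw [e]
      have : z n = h (z (n+1)) := by
        have e2 : (-n : ℤ) = 1 + -(n+1) := by ring
        simp only [hzdef, e2, zpow_apply_add, zpow_one]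
      rw [this]
      exact hmono (by rw [← hzn (n+1)]; exact h2)
    have hpiece1 : χ (h x) = F (n-1) (h x) := by
      rw [hχapp]
      exact G.piece ha hb
    have hpiece2 : χ x = F n x := by
      rw [hχapp]
      exact G.piece h1 h2
    rw [hpiece1, hpiece2]
    have harg : (h ^ (n-1)) (h x) = (h ^ n) x := by
      have : (h ^ (n-1)) (h x) = (h ^ ((n-1) + 1)) x := by
        rw [zpow_apply_add, zpow_one]
      rw [this]
      congr 1
      ring
    simp only [hFdef, harg]
    push_cast
    ring
  have invfeq : ∀ x : ℝ, χ (h⁻¹ x) = χ x + 2 := by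
    intro x
    have := feq (h⁻¹ x)
    rw [(by exact Equiv.apply_symm_apply h x : h (h⁻¹ x) = x)] at this
    linarith
  -- the reverser
  set r : Equiv.Perm ℝ := affinePerm (-1) 0 (by norm_num) with hrdef
  have hrapp : ∀ t : ℝ, r t = -t := fun t => by
    show -1 * t + 0 = -t
    ring
  set k : Equiv.Perm ℝ := χ⁻¹ * r * χ with hkdef
  have hkapp : ∀ t : ℝ, k t = χ.symm (-(χ t)) := by
    intro t
    show χ⁻¹ (r (χ t)) = χ.symm (-(χ t))
    rw [hrapp]
    rfl
  have hkinvol : k * k = 1 := by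
    apply Equiv.ext
    intro t
    show k (k t) = t
    rw [hkapp, hkapp, Equiv.apply_symm_apply, neg_neg, Equiv.symm_apply_apply]
  have hkinv : k⁻¹ = k := inv_eq_of_mul_eq_one_right hkinvol
  refine ⟨k, ?_, ?_⟩
  · exact (hχPL.inv.mul (inPL_affinePerm (-1) 0 (by norm_num))).mul hχPL
  · apply Equiv.ext
    intro x
    show k (h (k⁻¹ x)) = h⁻¹ x
    rw [hkinv]
    apply χ.injective
    have e1 : ∀ s : ℝ, χ (k s) = -(χ s) := by
      intro s
      rw [hkapp, Equiv.apply_symm_apply]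
    rw [e1, feq, e1, invfeq]
    ring

/-! ### Sequence helper -/

noncomputable def idxSeq (T : ℕ → ℝ → ℝ) (init : ℝ) : ℕ → ℝ
  | 0 => init
  | k+1 => T k (idxSeq T init k)

/-! ### Main theorem, increasing case -/

lemma main_increasing {f : Equiv.Perm ℝ} (hPL : InPL f) (hmono : StrictMono ⇑f) :
    ∃ g h : Equiv.Perm ℝ,
      (InPL g ∧ ∃ k : Equiv.Perm ℝ, InPL k ∧ k * g * k⁻¹ = g⁻¹) ∧
      (InPL h ∧ ∃ k : Equiv.Perm ℝ, InPL k ∧ k * h * k⁻¹ = h⁻¹) ∧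
      f = g * h := by
  set M : ℝ → ℝ := fun x => max (f x) x with hMdef
  have hMmono : StrictMono M := fun x y hxy => max_lt_max (hmono hxy) hxy
  have hMid : ∀ x, x ≤ M x := fun x => le_max_right _ _
  have hMf : ∀ x, f x ≤ M x := fun x => le_max_left _ _
  set pseq : ℕ → ℝ := idxSeq (fun _ c => M c + 1) 0 with hpdef
  set qseq : ℕ → ℝ := idxSeq (fun _ c => min (f.symm (c-1)) (c-1)) 0 with hqdef
  have hp : ∀ k : ℕ, M (pseq k) < pseq (k+1) ∧ pseq k + 1 ≤ pseq (k+1) := by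
    intro k
    have : pseq (k+1) = M (pseq k) + 1 := rfl
    rw [this]
    exact ⟨by linarith, by linarith [hMid (pseq k)]⟩
  have hq : ∀ k : ℕ, M (qseq (k+1)) < qseq k ∧ qseq (k+1) ≤ qseq k - 1 := by
    intro k
    have he : qseq (k+1) = min (f.symm (qseq k - 1)) (qseq k - 1) := rfl
    constructor
    · have h1 : f (qseq (k+1)) ≤ qseq k - 1 := by
        have : qseq (k+1) ≤ f.symm (qseq k - 1) := by rw [he]; exact min_le_left _ _
        calc f (qseq (k+1)) ≤ f (f.symm (qseq k - 1)) := hmono.le_iff_le.2 this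
          _ = qseq k - 1 := f.apply_symm_apply _
      have h2 : qseq (k+1) ≤ qseq k - 1 := by rw [he]; exact min_le_right _ _
      have : M (qseq (k+1)) ≤ qseq k - 1 := max_le h1 h2
      linarith
    · rw [he]; exact min_le_right _ _
  set zseq : ℤ → ℝ := fun n => if 0 ≤ n then pseq n.toNat else qseq (-n).toNat with hzdef
  have hzp : ∀ k : ℕ, zseq (k : ℤ) = pseq k := fun k => by
    simp only [hzdef, if_pos (Int.ofNat_nonneg k), Int.toNat_natCast]
  have hzq : ∀ k : ℕ, zseq (-(k : ℤ)) = qseq k := by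
    intro k
    rcases Nat.eq_zero_or_pos k with rfl | hk
    · show zseq 0 = qseq 0
      have h1 : zseq 0 = pseq 0 := by simp [hzdef]
      have h2 : pseq 0 = (0:ℝ) := rfl
      have h3 : qseq 0 = (0:ℝ) := rfl
      rw [h1, h2, h3]
    · have : ¬ (0 ≤ -(k:ℤ)) := by omega
      simp only [hzdef, if_neg this, neg_neg, Int.toNat_natCast]
  have key : ∀ n : ℤ, M (zseq n) < zseq (n+1) ∧ zseq n + 1 ≤ zseq (n+1) := by
    intro n
    rcases le_or_gt 0 n with hn | hn
    · obtain ⟨k, rfl⟩ := Int.eq_ofNat_of_zero_le hn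
      have e1 : ((k:ℤ)+1) = ((k+1 : ℕ) : ℤ) := by push_cast; ring
      rw [hzp k, e1, hzp (k+1)]
      exact hp k
    · have hk : ∃ k : ℕ, n = -(k:ℤ) - 1 := ⟨(-n-1).toNat, by omega⟩
      obtain ⟨k, rfl⟩ := hk
      have e1 : (-(k:ℤ) - 1) = -((k+1 : ℕ) : ℤ) := by push_cast; ring
      have e2 : (-(k:ℤ) - 1 + 1) = -((k : ℕ) : ℤ) := by push_cast; ring
      rw [e2, e1, hzq (k+1), hzq k]
      exact ⟨(hq k).1, by linarith [(hq k).2]⟩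
  have hzmono : StrictMono zseq := by
    apply strictMono_int_of_lt_succ
    intro n
    linarith [(key n).2]
  have hpk : ∀ k : ℕ, (k:ℝ) ≤ pseq k := by
    intro k
    induction k with
    | zero =>
      have : pseq 0 = 0 := rfl
      rw [this]; norm_num
    | succ m ih => push_cast; linarith [(hp m).2]
  have hqk : ∀ k : ℕ, qseq k ≤ -(k:ℝ) := by
    intro k
    induction k with
    | zero =>
      have : qseq 0 = 0 := rfl
      rw [this]; norm_num
    | succ m ih => push_cast; linarith [(hq m).2]
  have hztop : ∀ c : ℝ, ∃ n : ℤ, c < zseq n := by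
    intro c
    obtain ⟨k, hk⟩ := exists_nat_gt c
    exact ⟨k, by rw [hzp k]; exact lt_of_lt_of_le hk (hpk k)⟩
  have hzbot : ∀ c : ℝ, ∃ n : ℤ, zseq n ≤ c := by
    intro c
    obtain ⟨k, hk⟩ := exists_nat_gt (-c)
    exact ⟨-(k:ℤ), by rw [hzq k]; linarith [hqk k]⟩
  have hzd : ∀ n : ℤ, 0 < zseq (n+1) - zseq n := fun n => by linarith [(key n).2]
  set G : Glue :=
    { z := zseq
      w := fun n => zseq (n+2)
      F := fun n x => zseq (n+2) + (x - zseq n) * (zseq (n+3) - zseq (n+2)) / (zseq (n+1) - zseq n)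
      hz := hzmono
      hzbot := hzbot
      hztop := hztop
      hw := fun a b hab => hzmono (by omega)
      hwbot := fun c => by obtain ⟨n, hn⟩ := hzbot c; exact ⟨n - 2, by simpa using hn⟩
      hwtop := fun c => by obtain ⟨n, hn⟩ := hztop c; exact ⟨n - 2, by simpa using hn⟩
      hF0 := fun n => by simp
      hF1 := fun n => by
        have h1 := hzd n
        show zseq (n + 2) + (zseq (n + 1) - zseq n) * (zseq (n + 3) - zseq (n + 2)) /
            (zseq (n + 1) - zseq n) = zseq (n + 1 + 2)
        have e : (n + 1 + 2 : ℤ) = n + 3 := by ring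
        rw [e]
        field_simp
        ring
      hFmono := fun n => by
        intro x hx y hy hxy
        have h1 := hzd n
        have h2 : 0 < zseq (n+3) - zseq (n+2) := by
          have := hzd (n+2)
          have e : (n + 2 + 1 : ℤ) = n + 3 := by ring
          rwa [e] at this
        have h3 : (x - zseq n) * (zseq (n+3) - zseq (n+2)) < (y - zseq n) * (zseq (n+3) - zseq (n+2)) :=
          mul_lt_mul_of_pos_right (by linarith) h2
        have h4 : (x - zseq n) * (zseq (n+3) - zseq (n+2)) / (zseq (n+1) - zseq n)
            < (y - zseq n) * (zseq (n+3) - zseq (n+2)) / (zseq (n+1) - zseq n) := by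
          rw [div_lt_div_iff₀ h1 h1]
          nlinarith [h3, h1]
        linarith
      hFcont := fun n => by fun_prop }
    with hGdef
  set g : Equiv.Perm ℝ := G.toPerm with hgdef
  have hgapp : ∀ x : ℝ, g x = G.toFun x := fun x => rfl
  have hgmono : StrictMono ⇑g := G.strictMono
  have hgPL : InPL g := by
    refine ⟨G.isHomeo_toPerm, ?_⟩
    have hNA : AccFree {x : ℝ | ¬ IsLocallyAffineAt G.toFun x} := by
      apply G.accFree_NA
      intro n
      have hempty : {x : ℝ | ¬ IsLocallyAffineAt (G.F n) x} = ∅ := by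
        ext x
        simp only [Set.mem_setOf_eq, Set.mem_empty_iff_false, iff_false, not_not]
        have h1 := hzd n
        refine ⟨(zseq (n+3) - zseq (n+2)) / (zseq (n+1) - zseq n),
          zseq (n+2) - zseq n * ((zseq (n+3) - zseq (n+2)) / (zseq (n+1) - zseq n)),
          Filter.Eventually.of_forall fun y => ?_⟩
        show zseq (n+2) + (y - zseq n) * (zseq (n+3) - zseq (n+2)) / (zseq (n+1) - zseq n) = _
        field_simp
        ring
      rw [hempty]
      exact AccFree.finite Set.finite_empty
    exact hNA
  have hwz : ∀ m : ℤ, G.w m = zseq (m + 2) := fun m => rfl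
  have hgid : ∀ x : ℝ, x < g x := by
    intro x
    have h1 : G.w (G.idx x) ≤ g x := G.w_le_toFun x
    rw [hwz] at h1
    have h2 : x < zseq (G.idx x + 1) := G.lt_idx x
    have h3 : zseq (G.idx x + 1) < zseq (G.idx x + 2) := hzmono (by omega)
    linarith
  have hgf : ∀ x : ℝ, f x < g x := by
    intro x
    set n := G.idx x with hn
    have h2 : x < zseq (n+1) := G.lt_idx x
    have h4 : M x < M (zseq (n+1)) := hMmono h2
    have h5 : M (zseq (n+1)) < zseq (n+2) := by
      have hk := (key (n+1)).1
      have e : (n+1+1:ℤ) = n + 2 := by ring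
      rwa [e] at hk
    have h1 : G.w n ≤ g x := G.w_le_toFun x
    rw [hwz] at h1
    have h6 := hMf x
    linarith
  set h : Equiv.Perm ℝ := g⁻¹ * f with hhdef
  have hhapp : ∀ x : ℝ, h x = g.symm (f x) := fun x => rfl
  have hhlt : ∀ x : ℝ, h x < x := by
    intro x
    rw [← hgmono.lt_iff_lt]
    have hgh : g (h x) = f x := by rw [hhapp, g.apply_symm_apply]
    rw [hgh]
    exact hgf x
  have hhmono : StrictMono ⇑h := by
    intro x y hxy
    rw [hhapp, hhapp]
    exact strictMono_symm hgmono (hmono hxy)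
  have hhPL : InPL h := hgPL.inv.mul hPL
  have hginvlt : ∀ x : ℝ, g⁻¹ x < x := by
    intro x
    rw [← hgmono.lt_iff_lt, (by exact Equiv.apply_symm_apply g x : g (g⁻¹ x) = x)]
    exact hgid x
  have hginvmono : StrictMono ⇑g⁻¹ := strictMono_symm hgmono
  obtain ⟨k1, hk1PL, hk1⟩ := reversible_of_lt_id hgPL.inv hginvmono hginvlt
  obtain ⟨k2, hk2PL, hk2⟩ := reversible_of_lt_id hhPL hhmono hhlt
  refine ⟨g, h, ⟨hgPL, k1, hk1PL, ?_⟩, ⟨hhPL, k2, hk2PL, hk2⟩, by rw [hhdef]; group⟩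
  calc k1 * g * k1⁻¹ = (k1 * g⁻¹ * k1⁻¹)⁻¹ := by group
    _ = g⁻¹ := by rw [hk1]; group

/-! ### Main theorem, decreasing case -/

lemma main_decreasing {f : Equiv.Perm ℝ} (hPL : InPL f) (hanti : StrictAnti ⇑f) :
    ∃ g h : Equiv.Perm ℝ,
      (InPL g ∧ ∃ k : Equiv.Perm ℝ, InPL k ∧ k * g * k⁻¹ = g⁻¹) ∧
      (InPL h ∧ ∃ k : Equiv.Perm ℝ, InPL k ∧ k * h * k⁻¹ = h⁻¹) ∧
      f = g * h := by
  have hcont : Continuous ⇑f := hPL.1.1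
  have hsymcont : Continuous ⇑f.symm := hPL.1.2
  have hsyman : StrictAnti ⇑f.symm := strictAnti_symm hanti
  -- fixed point
  obtain ⟨q, hqfix⟩ : ∃ q : ℝ, f q = q := by
    set u : ℝ → ℝ := fun x => f x - x with hu
    have hucont : Continuous u := by fun_prop
    rcases lt_trichotomy (f 0) 0 with hc | hc | hc
    · have h1 : u (f 0) > 0 := by
        have h2 : f 0 < f (f 0) := hanti hc
        simp only [hu]; linarith
      have h2 : u 0 < 0 := by simp only [hu]; simpa using hc
      have := intermediate_value_Icc' hc.le (hucont.continuousOn (s := Set.Icc (f 0) 0))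
      have h0mem : (0:ℝ) ∈ Set.Icc (u 0) (u (f 0)) := ⟨h2.le, h1.le⟩
      obtain ⟨q, hq1, hq2⟩ := this h0mem
      exact ⟨q, by simp only [hu] at hq2; linarith⟩
    · exact ⟨0, hc⟩
    · have h1 : u 0 > 0 := by simp only [hu]; simpa using hc
      have h2 : u (f 0) < 0 := by
        have h3 : f (f 0) < f 0 := hanti hc
        simp only [hu]; linarith
      have := intermediate_value_Icc' hc.le (hucont.continuousOn (s := Set.Icc 0 (f 0)))
      have h0mem : (0:ℝ) ∈ Set.Icc (u (f 0)) (u 0) := ⟨h2.le, h1.le⟩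
      obtain ⟨q, hq1, hq2⟩ := this h0mem
      exact ⟨q, by simp only [hu] at hq2; linarith⟩
  have hqsym : f.symm q = q := by
    conv_lhs => rw [← hqfix]
    exact f.symm_apply_apply q
  set p : ℝ := q + 1 with hp
  have hfp : f p < p := by
    have : f p < f q := hanti (by simp [hp])
    rw [hqfix] at this; linarith
  have hsp : f.symm p < p := by
    have : f.symm p < f.symm q := hsyman (by simp [hp])
    rw [hqsym] at this; linarith
  -- sequences
  set bseq : ℕ → ℝ :=
    idxSeq (fun k c => (max (max (f.symm (p + k)) (f (p + k))) (c - 2) + c) / 2) p with hbdef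
  have hb0 : bseq 0 = p := rfl
  have hbstep : ∀ k : ℕ, bseq (k+1) =
      (max (max (f.symm (p + k)) (f (p + k))) (bseq k - 2) + bseq k) / 2 := fun k => rfl
  have hbinv : ∀ k : ℕ, f.symm (p + k) < bseq k ∧ f (p + k) < bseq k := by
    intro k
    induction k with
    | zero =>
      constructor
      · simpa [hb0] using hsp
      · simpa [hb0] using hfp
    | succ m ih =>
      have hBlt : max (max (f.symm (p + m)) (f (p + m))) (bseq m - 2) < bseq m := by
        apply max_lt (max_lt ih.1 ih.2) (by linarith)
      have hmid : max (max (f.symm (p + m)) (f (p + m))) (bseq m - 2) < bseq (m+1) := by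
        rw [hbstep m]; linarith
      have h1 : f.symm (p + (m+1)) < f.symm (p + m) := hsyman (by push_cast; linarith)
      have h2 : f (p + (m+1)) < f (p + m) := hanti (by push_cast; linarith)
      have h3 : f.symm (p + m) ≤ max (max (f.symm (p + m)) (f (p + m))) (bseq m - 2) :=
        le_max_of_le_left (le_max_left _ _)
      have h4 : f (p + m) ≤ max (max (f.symm (p + m)) (f (p + m))) (bseq m - 2) :=
        le_max_of_le_left (le_max_right _ _)
      exact ⟨by push_cast at h1 ⊢; linarith, by push_cast at h2 ⊢; linarith⟩
  have hbdec : ∀ k : ℕ, bseq (k+1) < bseq k := by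
    intro k
    have hBlt : max (max (f.symm (p + k)) (f (p + k))) (bseq k - 2) < bseq k :=
      max_lt (max_lt (hbinv k).1 (hbinv k).2) (by linarith)
    rw [hbstep k]; linarith
  have hD : ∀ k : ℕ, f.symm (p + k) ≤ bseq (k+1) ∧ f (p + k) ≤ bseq (k+1) := by
    intro k
    have hBlt : max (max (f.symm (p + k)) (f (p + k))) (bseq k - 2) < bseq k :=
      max_lt (max_lt (hbinv k).1 (hbinv k).2) (by linarith)
    have hmid : max (max (f.symm (p + k)) (f (p + k))) (bseq k - 2) ≤ bseq (k+1) := by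
      rw [hbstep k]; linarith
    exact ⟨le_trans (le_max_of_le_left (le_max_left _ _)) hmid,
      le_trans (le_max_of_le_left (le_max_right _ _)) hmid⟩
  -- unboundedness of bseq
  have hbbot : ∀ c : ℝ, ∃ k : ℕ, bseq k ≤ c := by
    intro c
    by_contra hbdd
    push_neg at hbdd
    obtain ⟨K, hK⟩ := exists_nat_gt (max (f (c - 3) - p) (f.symm (c - 3) - p))
    have hKbig : ∀ k : ℕ, K ≤ k → f.symm (p + k) < c - 2 ∧ f (p + k) < c - 2 := by
      intro k hk
      have hkK : (K:ℝ) ≤ k := by exact_mod_cast hk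
      constructor
      · have h1 : f (c - 3) < p + k := by
          have := le_max_left (f (c - 3) - p) (f.symm (c - 3) - p)
          linarith [hK, hkK]
        have := hsyman h1
        rw [f.symm_apply_apply] at this
        linarith
      · have h1 : f.symm (c - 3) < p + k := by
          have := le_max_right (f (c - 3) - p) (f.symm (c - 3) - p)
          linarith [hK, hkK]
        have := hanti h1
        rw [f.apply_symm_apply] at this
        linarith
    have hstep : ∀ j : ℕ, bseq (K + j) = bseq K - j := by
      intro j
      induction j with
      | zero => simp
      | succ m ih =>
        have hk := hKbig (K + m) (by omega)
        have hc1 : c < bseq (K + m) := hbdd (K + m)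
        have hmax : max (max (f.symm (p + ((K + m : ℕ) : ℝ))) (f (p + ((K + m : ℕ) : ℝ))))
            (bseq (K + m) - 2) = bseq (K + m) - 2 := by
          apply max_eq_right
          apply max_le
          · linarith [hk.1, hc1]
          · linarith [hk.2, hc1]
        have : bseq (K + m + 1) = bseq (K + m) - 1 := by
          rw [hbstep (K + m), hmax]; ring
        have e : K + (m + 1) = K + m + 1 := by omega
        rw [e, this, ih]
        push_cast; ring
    obtain ⟨j, hj⟩ := exists_nat_gt (bseq K - c)
    have := hbdd (K + j)
    rw [hstep j] at this
    linarith
  -- the z sequence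
  set zseq : ℤ → ℝ := fun n => if 0 ≤ n then p + n else bseq (-n).toNat with hzdef
  have hzpos : ∀ n : ℤ, 0 ≤ n → zseq n = p + n := fun n hn => by simp [hzdef, hn]
  have hzneg : ∀ k : ℕ, zseq (-(k:ℤ)) = bseq k := by
    intro k
    rcases Nat.eq_zero_or_pos k with rfl | hk
    · show zseq 0 = bseq 0
      rw [hzpos 0 le_rfl, hb0]; simp
    · have : ¬ (0 ≤ -(k:ℤ)) := by omega
      simp only [hzdef, if_neg this, neg_neg, Int.toNat_natCast]
  have hzmono : StrictMono zseq := by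
    apply strictMono_int_of_lt_succ
    intro n
    rcases le_or_gt 0 n with hn | hn
    · rw [hzpos n hn, hzpos (n+1) (by omega)]
      push_cast; linarith
    · have hk : ∃ k : ℕ, n = -(k:ℤ) - 1 := ⟨(-n-1).toNat, by omega⟩
      obtain ⟨k, rfl⟩ := hk
      have e1 : (-(k:ℤ) - 1) = -((k+1 : ℕ) : ℤ) := by push_cast; ring
      have e2 : (-(k:ℤ) - 1 + 1) = -((k : ℕ) : ℤ) := by push_cast; ring
      rw [e2, e1, hzneg (k+1), hzneg k]
      exact hbdec k
  have hztop : ∀ c : ℝ, ∃ n : ℤ, c < zseq n := by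
    intro c
    obtain ⟨k, hk⟩ := exists_nat_gt (c - p)
    refine ⟨k, ?_⟩
    rw [hzpos k (by omega)]
    push_cast; linarith
  have hzbot : ∀ c : ℝ, ∃ n : ℤ, zseq n ≤ c := by
    intro c
    obtain ⟨k, hk⟩ := hbbot c
    exact ⟨-(k:ℤ), by rw [hzneg k]; exact hk⟩
  have hzd : ∀ n : ℤ, 0 < zseq (n + 1) - zseq n := fun n => by
    linarith [hzmono (show n < n + 1 by omega)]
  set U : Glue :=
    { z := zseq
      w := fun n => (n : ℝ)
      F := fun n x => (n : ℝ) + (x - zseq n) / (zseq (n+1) - zseq n)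
      hz := hzmono
      hzbot := hzbot
      hztop := hztop
      hw := fun a b hab => by
        show (a:ℝ) < (b:ℝ)
        exact_mod_cast hab
      hwbot := fun c => by
        obtain ⟨n, hn⟩ := exists_int_lt c
        exact ⟨n, hn.le⟩
      hwtop := fun c => by
        obtain ⟨n, hn⟩ := exists_int_gt c
        exact ⟨n, hn⟩
      hF0 := fun n => by simp
      hF1 := fun n => by
        have h1 := hzd n
        show (n:ℝ) + (zseq (n+1) - zseq n) / (zseq (n+1) - zseq n) = ((n + 1 : ℤ) : ℝ)
        rw [div_self h1.ne']
        push_cast; ring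
      hFmono := fun n => by
        intro x hx y hy hxy
        have h1 := hzd n
        have h4 : (x - zseq n) / (zseq (n+1) - zseq n) < (y - zseq n) / (zseq (n+1) - zseq n) := by
          rw [div_lt_div_iff₀ h1 h1]
          nlinarith [h1]
        linarith
      hFcont := fun n => by fun_prop }
    with hUdef
  set uP : Equiv.Perm ℝ := U.toPerm with huPdef
  have huapp : ∀ x : ℝ, uP x = U.toFun x := fun x => rfl
  have humono : StrictMono ⇑uP := U.strictMono
  have huPL : InPL uP := by
    refine ⟨U.isHomeo_toPerm, ?_⟩
    have hNA : AccFree {x : ℝ | ¬ IsLocallyAffineAt U.toFun x} := by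
      apply U.accFree_NA
      intro n
      have hempty : {x : ℝ | ¬ IsLocallyAffineAt (U.F n) x} = ∅ := by
        ext x
        simp only [Set.mem_setOf_eq, Set.mem_empty_iff_false, iff_false, not_not]
        have h1 := hzd n
        refine ⟨1 / (zseq (n+1) - zseq n), (n:ℝ) - zseq n / (zseq (n+1) - zseq n),
          Filter.Eventually.of_forall fun y => ?_⟩
        show (n:ℝ) + (y - zseq n) / (zseq (n+1) - zseq n) = _
        field_simp
        ring
      rw [hempty]
      exact AccFree.finite Set.finite_empty
    exact hNA
  set r : Equiv.Perm ℝ := affinePerm (-1) 0 (by norm_num) with hrdef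
  have hrapp : ∀ t : ℝ, r t = -t := fun t => by show -1 * t + 0 = -t; ring
  have hrPL : InPL r := inPL_affinePerm (-1) 0 (by norm_num)
  set hI : Equiv.Perm ℝ := uP⁻¹ * r * uP with hIdef
  have hIapp : ∀ t : ℝ, hI t = uP.symm (-(uP t)) := by
    intro t
    show uP⁻¹ (r (uP t)) = _
    rw [hrapp]
    rfl
  have hIinvol : hI * hI = 1 := by
    apply Equiv.ext
    intro t
    show hI (hI t) = t
    rw [hIapp, hIapp, Equiv.apply_symm_apply, neg_neg, Equiv.symm_apply_apply]
  have hIPL : InPL hI := (huPL.inv.mul hrPL).mul huPL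
  have hwn : ∀ m : ℤ, U.w m = (m:ℝ) := fun m => rfl
  have hgtphi : ∀ x : ℝ, f.symm x < hI x := by
    intro x
    rw [hIapp]
    set n := U.idx x with hn
    have h1 : zseq n ≤ x := U.idx_le x
    have h2 : uP x < ((n:ℝ)+1) := by
      have := U.toFun_lt_w x
      rw [hwn] at this
      rw [huapp]
      push_cast at this ⊢
      exact this
    have hclaim : f.symm (zseq n) ≤ zseq (-(n+1)) := by
      rcases le_or_gt 0 n with hn0 | hn0
      · obtain ⟨k, hk2⟩ := Int.eq_ofNat_of_zero_le hn0
        rw [hk2, hzpos k (by omega)]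
        have e : (-((k:ℤ)+1)) = -((k+1 : ℕ) : ℤ) := by push_cast; ring
        rw [e, hzneg (k+1)]
        have hDk := (hD k).1
        have ecast : ((k : ℤ) : ℝ) = ((k : ℕ) : ℝ) := by push_cast; ring
        rw [ecast]
        exact hDk
      · have hk : ∃ k : ℕ, n = -(k:ℤ) - 1 := ⟨(-n-1).toNat, by omega⟩
        obtain ⟨k, hk2⟩ := hk
        rw [hk2]
        have e1 : (-(k:ℤ) - 1) = -((k+1 : ℕ) : ℤ) := by push_cast; ring
        have e2 : (-(-(k:ℤ) - 1 + 1)) = (k : ℤ) := by push_cast; ring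
        rw [e2, e1, hzneg (k+1), hzpos k (by omega)]
        have hDk := (hD k).2
        have := hsyman.antitone hDk
        rw [f.symm_apply_apply] at this
        have ecast : ((k : ℤ) : ℝ) = ((k : ℕ) : ℝ) := by push_cast; ring
        rw [ecast]
        exact this
    have h3 : uP (f.symm x) ≤ -((n:ℝ)+1) := by
      have ha : f.symm x ≤ f.symm (zseq n) := hsyman.antitone h1
      have hb : uP (f.symm x) ≤ uP (zseq (-(n+1))) := humono.monotone (ha.trans hclaim)
      have hc2 : uP (zseq (-(n+1))) = ((-(n+1) : ℤ) : ℝ) := by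
        rw [huapp]
        exact U.apply_z (-(n+1))
      rw [hc2] at hb
      push_cast at hb ⊢
      linarith
    rw [← humono.lt_iff_lt, Equiv.apply_symm_apply]
    linarith
  set g : Equiv.Perm ℝ := f * hI with hgdef
  have hgapp : ∀ x : ℝ, g x = f (hI x) := fun x => rfl
  have hIanti : StrictAnti ⇑hI := by
    intro x y hxy
    rw [hIapp, hIapp]
    exact strictMono_symm humono (by linarith [humono hxy])
  have hgmono : StrictMono ⇑g := by
    intro x y hxy
    rw [hgapp, hgapp]
    exact hanti (hIanti hxy)
  have hglt : ∀ x : ℝ, g x < x := by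
    intro x
    rw [hgapp]
    have := hanti (hgtphi x)
    rwa [f.apply_symm_apply] at this
  have hgPL : InPL g := hPL.mul hIPL
  obtain ⟨k1, hk1PL, hk1⟩ := reversible_of_lt_id hgPL hgmono hglt
  have hIinv : hI⁻¹ = hI := inv_eq_of_mul_eq_one_right hIinvol
  refine ⟨g, hI, ⟨hgPL, k1, hk1PL, hk1⟩, ⟨hIPL, 1, inPL_one, by rw [hIinv]; group⟩, ?_⟩
  rw [hgdef, mul_assoc, hIinvol, mul_one]


/-- PL(ℝ) = R₂(PL(ℝ)): every element of PL(ℝ) is a composite of two elements of PL(ℝ),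
each reversible in PL(ℝ). -/
theorem stmt_4 (f : Equiv.Perm ℝ) (hf : InPL f) :
    ∃ g h : Equiv.Perm ℝ,
      (InPL g ∧ ∃ k : Equiv.Perm ℝ, InPL k ∧ k * g * k⁻¹ = g⁻¹) ∧
      (InPL h ∧ ∃ k : Equiv.Perm ℝ, InPL k ∧ k * h * k⁻¹ = h⁻¹) ∧
      f = g * h := by
  rcases (hf.1.1).strictMono_of_inj f.injective with hm | ha
  · exact main_increasing hf hm
  · exact main_decreasing hf ha
end

section
/- Let f be a strictly increasing homeomorphism of ℝ. Then f is strongly reversible in H(ℝ) (i.e., there is an involution σ among the homeomorphisms of ℝ with σ ∘ f ∘ σ = f⁻¹) if and only if there is a strictly decreasing homeomorphism h of ℝ with h ∘ f ∘ h⁻¹ = f⁻¹. -/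
namespace Stmt5Aux

lemma perm_apply_inv_self (f : Equiv.Perm ℝ) (x : ℝ) : f (f⁻¹ x) = x := by simp

lemma perm_inv_apply_self (f : Equiv.Perm ℝ) (x : ℝ) : f⁻¹ (f x) = x := by simp

open scoped Classical in
/-- The candidate reversing involution. -/
noncomputable def sig (f h : Equiv.Perm ℝ) (p : ℝ) : ℝ → ℝ := fun x =>
  if hx : ∃ n : ℤ, (f ^ n) p ≤ x ∧ x < (f ^ (n + 1)) p then
    (f ^ (-(hx.choose) - 1)) (p + f p - (f ^ (-(hx.choose))) x)
  else if p < x then h x else h⁻¹ x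

lemma inv_strictMono {f : Equiv.Perm ℝ} (hfm : StrictMono ⇑f) : StrictMono ⇑f⁻¹ := by
  intro a b hab
  have : f (f⁻¹ a) < f (f⁻¹ b) := by simpa using hab
  exact hfm.lt_iff_lt.mp this

lemma zpow_strictMono {f : Equiv.Perm ℝ} (hfm : StrictMono ⇑f) :
    ∀ n : ℤ, StrictMono ⇑(f ^ n) := by
  intro n
  induction n using Int.induction_on with
  | zero => simpa using strictMono_id
  | succ n ih =>
      rw [zpow_add_one]
      intro a b hab
      simp only [Equiv.Perm.mul_apply]
      exact ih (hfm hab)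
  | pred n ih =>
      rw [zpow_sub_one]
      intro a b hab
      simp only [Equiv.Perm.mul_apply]
      exact ih (inv_strictMono hfm hab)

lemma zz (f : Equiv.Perm ℝ) (n m : ℤ) (x : ℝ) :
    (f ^ n) ((f ^ m) x) = (f ^ (n + m)) x := by
  rw [← Equiv.Perm.mul_apply, ← zpow_add]

theorem core {f h : Equiv.Perm ℝ} {p : ℝ} (hfm : StrictMono ⇑f) (ha : StrictAnti ⇑h)
    (hrev : ∀ x, h (f x) = f⁻¹ (h x)) (hp : h p = p) (hfp : p < f p) :
    (∀ x, sig f h p (sig f h p x) = x) ∧ StrictAnti (sig f h p) ∧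
      (∀ x, sig f h p (f x) = f⁻¹ (sig f h p x)) := by
  classical
  have Heq : h * f = f⁻¹ * h := Equiv.ext hrev
  have hconj : h * f * h⁻¹ = f⁻¹ := by rw [Heq, mul_inv_cancel_right]
  have hzrev : ∀ n : ℤ, h * f ^ n = f ^ (-n) * h := by
    intro n
    have h1 : (h * f * h⁻¹) ^ n = h * f ^ n * h⁻¹ := conj_zpow
    rw [hconj] at h1
    rw [zpow_neg, ← inv_zpow, h1, inv_mul_cancel_right]
  have hrevn : ∀ (n : ℤ) (x : ℝ), h ((f ^ n) x) = (f ^ (-n)) (h x) := by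
    intro n x
    simpa using congrArg (fun g : Equiv.Perm ℝ => g x) (hzrev n)
  have hconj' : h⁻¹ * f * h = f⁻¹ := by
    have h2 : h⁻¹ * f⁻¹ * h = f := by rw [← hconj]; group
    calc h⁻¹ * f * h = (h⁻¹ * f⁻¹ * h)⁻¹ := by group
    _ = f⁻¹ := by rw [h2]
  have hzrev' : ∀ n : ℤ, h⁻¹ * f ^ n = f ^ (-n) * h⁻¹ := by
    intro n
    have h1 : (h⁻¹ * f * (h⁻¹)⁻¹) ^ n = h⁻¹ * f ^ n * (h⁻¹)⁻¹ := conj_zpow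
    rw [inv_inv, hconj'] at h1
    rw [zpow_neg, ← inv_zpow, h1]
    group
  have hrevn' : ∀ (n : ℤ) (x : ℝ), h⁻¹ ((f ^ n) x) = (f ^ (-n)) (h⁻¹ x) := by
    intro n x
    simpa using congrArg (fun g : Equiv.Perm ℝ => g x) (hzrev' n)
  have hp' : h⁻¹ p = p := by
    conv_lhs => rw [← hp]
    simp
  have ha' : StrictAnti ⇑h⁻¹ := by
    intro a b hab
    have : h (h⁻¹ a) < h (h⁻¹ b) := by simpa using hab
    exact ha.lt_iff_gt.mp this
  have hstep : ∀ (m : ℤ) (t : ℝ), f ((f ^ m) t) = (f ^ (m + 1)) t := by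
    intro m t
    rw [show (f : Equiv.Perm ℝ) ((f ^ m) t) = (f ^ (1 : ℤ)) ((f ^ m) t) by simp, zz, add_comm 1 _]
  have hstep' : ∀ (m : ℤ) (t : ℝ), f⁻¹ ((f ^ m) t) = (f ^ (m - 1)) t := by
    intro m t
    rw [show (f⁻¹ : Equiv.Perm ℝ) ((f ^ m) t) = (f ^ (-1 : ℤ)) ((f ^ m) t) by simp, zz,
      show (-1 + m : ℤ) = m - 1 by ring]
  have horb1 : ∀ n : ℤ, (f ^ n) p < (f ^ (n + 1)) p := by
    intro n
    have h1 : (f ^ n) p < (f ^ n) (f p) := zpow_strictMono hfm n hfp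
    rwa [show (f : Equiv.Perm ℝ) p = (f ^ (1 : ℤ)) p by simp, zz] at h1
  have horb : StrictMono (fun n : ℤ => (f ^ n) p) := strictMono_int_of_lt_succ horb1
  -- trichotomy
  have htri : ∀ x : ℝ, (∃ n : ℤ, (f ^ n) p ≤ x ∧ x < (f ^ (n + 1)) p) ∨
      (∀ n : ℤ, (f ^ n) p ≤ x) ∨ (∀ n : ℤ, x ≤ (f ^ n) p) := by
    intro x
    by_cases hR : ∀ n : ℤ, (f ^ n) p ≤ x
    · exact Or.inr (Or.inl hR)
    by_cases hL : ∀ n : ℤ, x ≤ (f ^ n) p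
    · exact Or.inr (Or.inr hL)
    left
    push_neg at hR hL
    obtain ⟨m, hm⟩ := hR
    obtain ⟨k, hk⟩ := hL
    have Hbdd : ∃ b : ℤ, ∀ z : ℤ, (f ^ z) p ≤ x → z ≤ b := by
      refine ⟨m, fun z hz => ?_⟩
      by_contra hc
      push_neg at hc
      exact absurd (lt_of_lt_of_le hm (horb.monotone hc.le)) (not_lt.mpr hz)
    obtain ⟨n, hn1, hn2⟩ := Int.exists_greatest_of_bdd Hbdd ⟨k, hk.le⟩
    refine ⟨n, hn1, ?_⟩
    by_contra hc
    push_neg at hc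
    exact absurd (hn2 (n + 1) hc) (by omega)
  have huniq : ∀ {n m : ℤ} {x : ℝ}, (f ^ n) p ≤ x → x < (f ^ (n + 1)) p →
      (f ^ m) p ≤ x → x < (f ^ (m + 1)) p → n = m := by
    intro n m x h1 h2 h3 h4
    by_contra hc
    rcases lt_or_gt_of_ne hc with hlt | hlt
    · exact absurd (le_trans (horb.monotone (by omega : n + 1 ≤ m)) h3) (not_le.mpr h2)
    · exact absurd (le_trans (horb.monotone (by omega : m + 1 ≤ n)) h1) (not_le.mpr h4)
  -- characterizations of sig
  have hA : ∀ {n : ℤ} {x : ℝ}, (f ^ n) p ≤ x → x < (f ^ (n + 1)) p →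
      sig f h p x = (f ^ (-n - 1)) (p + f p - (f ^ (-n)) x) := by
    intro n x h1 h2
    have hx : ∃ n : ℤ, (f ^ n) p ≤ x ∧ x < (f ^ (n + 1)) p := ⟨n, h1, h2⟩
    simp only [sig]
    rw [dif_pos hx]
    obtain ⟨hc1, hc2⟩ := hx.choose_spec
    rw [huniq hc1 hc2 h1 h2]
  have hR : ∀ {x : ℝ}, (∀ n : ℤ, (f ^ n) p ≤ x) → sig f h p x = h x := by
    intro x hx
    have hne : ¬∃ n : ℤ, (f ^ n) p ≤ x ∧ x < (f ^ (n + 1)) p := by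
      rintro ⟨n, -, h2⟩
      exact absurd (hx (n + 1)) (not_le.mpr h2)
    have hpx : p < x := lt_of_lt_of_le (by simpa using horb1 0) (hx 1)
    simp only [sig]
    rw [dif_neg hne, if_pos hpx]
  have hL : ∀ {x : ℝ}, (∀ n : ℤ, x ≤ (f ^ n) p) → sig f h p x = h⁻¹ x := by
    intro x hx
    have hne : ¬∃ n : ℤ, (f ^ n) p ≤ x ∧ x < (f ^ (n + 1)) p := by
      rintro ⟨n, h1, h2⟩
      have h3 := horb1 (n - 1)
      rw [sub_add_cancel] at h3
      exact absurd h1 (not_le.mpr (lt_of_le_of_lt (hx (n - 1)) h3))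
    have hpx : ¬p < x := by
      have h3 := horb1 (-1)
      rw [neg_add_cancel] at h3
      push_neg
      exact le_of_lt (lt_of_le_of_lt (hx (-1)) (by simpa using h3))
    simp only [sig]
    rw [dif_neg hne, if_neg hpx]
  -- basic bounds
  have hy_mem : ∀ {n : ℤ} {x : ℝ}, (f ^ n) p ≤ x → x < (f ^ (n + 1)) p →
      p ≤ (f ^ (-n)) x ∧ (f ^ (-n)) x < f p := by
    intro n x h1 h2
    constructor
    · have h3 := (zpow_strictMono hfm (-n)).monotone h1
      rwa [zz, neg_add_cancel, show ((f ^ (0 : ℤ)) p : ℝ) = p by simp] at h3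
    · have h3 := zpow_strictMono hfm (-n) h2
      rwa [zz, show (-n + (n + 1) : ℤ) = 1 by ring, zpow_one] at h3
  have hσA_mem : ∀ {n : ℤ} {x : ℝ}, (f ^ n) p ≤ x → x < (f ^ (n + 1)) p →
      (f ^ (-n - 1)) p < sig f h p x ∧ sig f h p x ≤ (f ^ (-n)) p := by
    intro n x h1 h2
    obtain ⟨hy1, hy2⟩ := hy_mem h1 h2
    rw [hA h1 h2]
    constructor
    · exact zpow_strictMono hfm (-n - 1) (by linarith)
    · have h3 := (zpow_strictMono hfm (-n - 1)).monotone
        (show p + f p - (f ^ (-n)) x ≤ f p by linarith)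
      rwa [show (f : Equiv.Perm ℝ) p = (f ^ (1 : ℤ)) p by simp, zz,
        show (-n - 1 + 1 : ℤ) = -n by ring] at h3
  have hhR : ∀ {x : ℝ}, (∀ n : ℤ, (f ^ n) p ≤ x) → ∀ m : ℤ, h x ≤ (f ^ m) p := by
    intro x hx m
    have h2 := ha.antitone (hx (-m))
    rwa [hrevn, hp, neg_neg] at h2
  have hhL : ∀ {x : ℝ}, (∀ n : ℤ, x ≤ (f ^ n) p) → ∀ m : ℤ, (f ^ m) p ≤ h⁻¹ x := by
    intro x hx m
    have h2 := ha'.antitone (hx (-m))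
    rwa [hrevn', hp', neg_neg] at h2
  refine ⟨?_, ?_, ?_⟩
  · -- involution
    intro x
    rcases htri x with ⟨n, h1, h2⟩ | hx | hx
    · obtain ⟨hy1, hy2⟩ := hy_mem h1 h2
      have hx_eq : x = (f ^ n) ((f ^ (-n)) x) := by rw [zz, add_neg_cancel]; simp
      rcases eq_or_lt_of_le hy1 with hyp | hyp
      · have hσx : sig f h p x = (f ^ (-n)) p := by
          rw [hA h1 h2, ← hyp, show p + f p - p = f p by ring,
            show (f : Equiv.Perm ℝ) p = (f ^ (1 : ℤ)) p by simp, zz,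
            show (-n - 1 + 1 : ℤ) = -n by ring]
        have hσσ := hA (le_refl ((f ^ (-n)) p)) (horb1 (-n))
        rw [hσx, hσσ, zz, show (-(-n) + -n : ℤ) = 0 by ring]
        simp only [zpow_zero, Equiv.Perm.coe_one, id_eq]
        rw [show p + f p - p = f p by ring,
          show (f : Equiv.Perm ℝ) p = (f ^ (1 : ℤ)) p by simp, zz,
          show (-(-n) - 1 + 1 : ℤ) = n by ring]
        conv_rhs => rw [hx_eq, ← hyp]
      · have hσx : sig f h p x = (f ^ (-n - 1)) (p + f p - (f ^ (-n)) x) := hA h1 h2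
        have hi1 : (f ^ (-n - 1)) p ≤ sig f h p x := by
          rw [hσx]
          exact (zpow_strictMono hfm (-n - 1)).monotone (by linarith)
        have hi2 : sig f h p x < (f ^ (-n - 1 + 1)) p := by
          rw [hσx]
          have h3 := zpow_strictMono hfm (-n - 1)
            (show p + f p - (f ^ (-n)) x < f p by linarith)
          rwa [show (f : Equiv.Perm ℝ) p = (f ^ (1 : ℤ)) p by simp, zz] at h3
        have h4 := hA hi1 hi2
        rw [h4, hσx, zz, show (-(-n - 1) + (-n - 1) : ℤ) = 0 by ring]
        simp only [zpow_zero, Equiv.Perm.coe_one, id_eq]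
        rw [show p + f p - (p + f p - (f ^ (-n)) x) = (f ^ (-n)) x by ring,
          show (-(-n - 1) - 1 : ℤ) = n by ring]
        exact hx_eq.symm
    · rw [hR hx, hL (hhR hx)]
      simp
    · rw [hL hx, hR (hhL hx)]
      simp
  · -- strictly decreasing
    intro x x' hxx'
    rcases htri x with ⟨n, h1, h2⟩ | hx | hx <;>
      rcases htri x' with ⟨n', h1', h2'⟩ | hx' | hx'
    · -- A A
      have hnn' : n ≤ n' := by
        by_contra hc
        push_neg at hc
        have : x' < x := lt_of_lt_of_le h2'
          (le_trans (horb.monotone (by omega : n' + 1 ≤ n)) h1)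
        linarith
      rcases eq_or_lt_of_le hnn' with rfl | hlt
      · rw [hA h1 h2, hA h1' h2']
        apply zpow_strictMono hfm (-n - 1)
        have := zpow_strictMono hfm (-n) hxx'
        linarith
      · have hb1 := (hσA_mem h1 h2).1
        have hb2 := (hσA_mem h1' h2').2
        have h3 : (f ^ (-n')) p ≤ (f ^ (-n - 1)) p := horb.monotone (by omega)
        linarith
    · -- A R
      have hb1 := (hσA_mem h1 h2).1
      have h3 := hhR hx' (-n - 1 - 1)
      have h4 : (f ^ (-n - 1 - 1)) p < (f ^ (-n - 1)) p := by
        have h5 := horb1 (-n - 1 - 1)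
        rwa [sub_add_cancel] at h5
      rw [hR hx']
      linarith
    · -- A L : impossible
      exact absurd (hxx'.trans_le ((hx' n).trans h1)) (lt_irrefl x)
    · -- R A : impossible
      exact absurd ((h2'.trans_le (hx (n' + 1))).trans hxx') (lt_irrefl x')
    · -- R R
      rw [hR hx, hR hx']
      exact ha hxx'
    · -- R L : impossible
      exact absurd (hxx'.trans_le ((hx' 0).trans (hx 0))) (lt_irrefl x)
    · -- L A
      have hb2 := (hσA_mem h1' h2').2
      have h3 := hhL hx (-n' + 1)
      have h4 : (f ^ (-n')) p < (f ^ (-n' + 1)) p := horb1 (-n')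
      rw [hL hx]
      linarith
    · -- L R
      rw [hL hx, hR hx']
      have h3 := hhL hx 1
      have h4 := hhR hx' 0
      have h5 : (f ^ (0 : ℤ)) p < (f ^ (1 : ℤ)) p := by simpa using horb1 0
      linarith
    · -- L L
      rw [hL hx, hL hx']
      exact ha' hxx'
  · -- conjugation
    intro x
    rcases htri x with ⟨n, h1, h2⟩ | hx | hx
    · have h1' : (f ^ (n + 1)) p ≤ f x := by
        have h3 := hfm.monotone h1
        rwa [hstep] at h3
      have h2' : f x < (f ^ (n + 1 + 1)) p := by
        have h3 := hfm h2
        rwa [hstep] at h3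
      rw [hA h1' h2', hA h1 h2, hstep',
        show (f : Equiv.Perm ℝ) x = (f ^ (1 : ℤ)) x by simp, zz,
        show (-(n + 1) + 1 : ℤ) = -n by ring,
        show (-(n + 1) - 1 : ℤ) = -n - 1 - 1 by ring]
    · have hx' : ∀ m : ℤ, (f ^ m) p ≤ f x := by
        intro m
        have h3 := hfm.monotone (hx (m - 1))
        rwa [hstep, sub_add_cancel] at h3
      rw [hR hx', hR hx, hrev x]
    · have hx' : ∀ m : ℤ, f x ≤ (f ^ m) p := by
        intro m
        have h3 := hfm.monotone (hx (m - 1))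
        rwa [hstep, sub_add_cancel] at h3
      rw [hL hx', hL hx]
      simpa using hrevn' 1 x


theorem build (f : Equiv.Perm ℝ) (σ : ℝ → ℝ)
    (hinv : ∀ x, σ (σ x) = x) (hanti : StrictAnti σ)
    (hcomm : ∀ x, σ (f x) = f⁻¹ (σ x)) :
    ∃ s : Equiv.Perm ℝ, IsHomeo s ∧ s * s = 1 ∧ s * f * s = f⁻¹ := by
  refine ⟨⟨σ, σ, hinv, hinv⟩, ⟨?_, ?_⟩, ?_, ?_⟩
  case refine_3 =>
    ext x
    simpa using hinv x
  case refine_4 =>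
    ext x
    show σ (f (σ x)) = f⁻¹ x
    rw [hcomm, hinv]
  all_goals
    show Continuous σ
    have hsurj' : Function.Surjective (fun x => σ (-x)) := fun y =>
      ⟨-(σ y), by simpa using hinv y⟩
    have hmono : StrictMono (fun x => σ (-x)) := fun a b hab => hanti (neg_lt_neg hab)
    have hcont' : Continuous (fun x => σ (-x)) := by
      have h1 := (StrictMono.orderIsoOfSurjective _ hmono hsurj').toHomeomorph.continuous
      rwa [OrderIso.coe_toHomeomorph, StrictMono.coe_orderIsoOfSurjective] at h1
    have : σ = (fun x => σ (-x)) ∘ Neg.neg := by funext x; simp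
    rw [this]
    exact hcont'.comp continuous_neg


end Stmt5Aux

open Stmt5Aux in
/-- A strictly increasing homeomorphism of ℝ is strongly reversible in H(ℝ) iff it is
reversed by a strictly decreasing homeomorphism of ℝ. -/
theorem stmt_5 (f : Equiv.Perm ℝ) (hf : IsHomeo f) (hfm : StrictMono (⇑f)) :
    (∃ σ : Equiv.Perm ℝ, IsHomeo σ ∧ σ * σ = 1 ∧ σ * f * σ = f⁻¹) ↔
    (∃ h : Equiv.Perm ℝ, IsHomeo h ∧ StrictAnti (⇑h) ∧ h * f * h⁻¹ = f⁻¹) := by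
  have mono_invol_id : ∀ g : Equiv.Perm ℝ, StrictMono ⇑g → (∀ x, g (g x) = x) →
      ∀ x, g x = x := by
    intro g hg hgg x
    rcases lt_trichotomy (g x) x with hlt | heq | hlt
    · have h1 := hg hlt
      rw [hgg] at h1
      exact absurd (h1.trans hlt) (lt_irrefl x)
    · exact heq
    · have h1 := hg hlt
      rw [hgg] at h1
      exact absurd (hlt.trans h1) (lt_irrefl x)
  constructor
  · rintro ⟨σ, hσh, hσ2, hσc⟩
    have hσσ : ∀ x, σ (σ x) = x := fun x => by
      simpa using congrArg (fun g : Equiv.Perm ℝ => g x) hσ2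
    rcases Continuous.strictMono_of_inj hσh.1 σ.injective with hm | hanti
    · -- σ is increasing, hence the identity, hence f is an involution, hence f = 1
      have hσ1 : σ = 1 := Equiv.ext fun x => mono_invol_id σ hm hσσ x
      have hff : f = f⁻¹ := by
        rw [← hσc, hσ1]
        group
      have hff' : ∀ y, f y = f⁻¹ y := fun y => congrArg (fun g : Equiv.Perm ℝ => g y) hff
      have hf2 : ∀ x, f (f x) = x := by
        intro x
        rw [hff' (f x)]
        simp
      have hf1 : f = 1 := Equiv.ext fun x => mono_invol_id f hfm hf2 x
      refine ⟨Equiv.neg ℝ, ⟨?_, ?_⟩, ?_, ?_⟩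
      · show Continuous fun x : ℝ => -x
        exact continuous_neg
      · show Continuous fun x : ℝ => -x
        exact continuous_neg
      · intro a b hab
        show -b < -a
        exact neg_lt_neg hab
      · rw [hf1]
        group
    · refine ⟨σ, hσh, hanti, ?_⟩
      rw [inv_eq_of_mul_eq_one_right hσ2]
      exact hσc
  · rintro ⟨h, hhh, hanti, hconj⟩
    -- pointwise reversal relation
    have hrev : ∀ x, h (f x) = f⁻¹ (h x) := by
      intro x
      have e : h * f = f⁻¹ * h := by
        rw [← hconj]
        group
      simpa using congrArg (fun g : Equiv.Perm ℝ => g x) e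
    -- h has a fixed point
    obtain ⟨p, hp⟩ : ∃ p : ℝ, h p = p := by
      have hcg : ContinuousOn (fun x : ℝ => h x - x) (Set.Icc (min (h 0) 0) (max (h 0) 0)) :=
        (hhh.1.sub continuous_id).continuousOn
      rcases lt_trichotomy (h 0) 0 with h0 | h0 | h0
      · have h1 : 0 < h (h 0) - h 0 := by
          have := hanti h0
          linarith
        have h2 : h 0 - 0 < 0 := by linarith
        have hmem : (0 : ℝ) ∈ Set.Icc ((fun x : ℝ => h x - x) 0) ((fun x : ℝ => h x - x) (h 0)) :=
          ⟨by simpa using h2.le, by simpa using h1.le⟩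
        have := intermediate_value_Icc' h0.le
          ((hhh.1.sub continuous_id).continuousOn) hmem
        obtain ⟨p, _, hp⟩ := this
        exact ⟨p, by dsimp at hp; linarith⟩
      · exact ⟨0, h0⟩
      · have h1 : h (h 0) - h 0 < 0 := by
          have := hanti h0
          linarith
        have h2 : 0 < h 0 - 0 := by linarith
        have hmem : (0 : ℝ) ∈ Set.Icc ((fun x : ℝ => h x - x) (h 0)) ((fun x : ℝ => h x - x) 0) :=
          ⟨by simpa using h1.le, by simpa using h2.le⟩
        have := intermediate_value_Icc' h0.le
          ((hhh.1.sub continuous_id).continuousOn) hmem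
        obtain ⟨p, _, hp⟩ := this
        exact ⟨p, by dsimp at hp; linarith⟩
      
    rcases lt_trichotomy p (f p) with hfp | hfp | hfp
    · obtain ⟨A, B, C⟩ := core hfm hanti hrev hp hfp
      exact build f _ A B C
    · -- degenerate case : f p = p
      have hp' : h⁻¹ p = p := by
        conv_lhs => rw [← hp]
        simp
      have ha' : StrictAnti ⇑h⁻¹ := by
        intro a b hab
        have : h (h⁻¹ a) < h (h⁻¹ b) := by simpa using hab
        exact hanti.lt_iff_gt.mp this
      have hrev' : ∀ x, h⁻¹ (f x) = f⁻¹ (h⁻¹ x) := by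
        intro x
        have h1 := hrev (f⁻¹ (h⁻¹ x))
        rw [perm_apply_inv_self, perm_apply_inv_self] at h1
        have h2 : f x = h (f⁻¹ (h⁻¹ x)) := by
          conv_lhs => rw [h1]
          rw [perm_apply_inv_self]
        rw [h2]
        simp
      set τ : ℝ → ℝ := fun x => if p < x then h x else h⁻¹ x with hτ
      have hτpos : ∀ {x : ℝ}, p < x → τ x = h x := fun {x} hx => if_pos hx
      have hτneg : ∀ {x : ℝ}, ¬p < x → τ x = h⁻¹ x := fun {x} hx => if_neg hx
      have hAinv : ∀ x, τ (τ x) = x := by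
        intro x
        rcases lt_trichotomy p x with hx | hx | hx
        · have h1 : h x < p := by
            have := hanti hx
            rwa [hp] at this
          rw [hτpos hx, hτneg (not_lt.mpr h1.le)]
          simp
        · subst hx
          rw [hτneg (lt_irrefl p), hp', hτneg (lt_irrefl p), hp']
        · have h1 : p < h⁻¹ x := by
            have := ha' hx
            rwa [hp'] at this
          rw [hτneg (not_lt.mpr hx.le), hτpos h1]
          simp
      have hBanti : StrictAnti τ := by
        intro a b hab
        by_cases hpa : p < a
        · rw [hτpos hpa, hτpos (hpa.trans hab)]
          exact hanti hab
        · by_cases hpb : p < b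
          · rw [hτneg hpa, hτpos hpb]
            have h1 : h b < p := by
              have := hanti hpb
              rwa [hp] at this
            have h2 : p ≤ h⁻¹ a := by
              have := ha'.antitone (not_lt.mp hpa)
              rwa [hp'] at this
            linarith
          · rw [hτneg hpa, hτneg hpb]
            exact ha' hab
      have hCcomm : ∀ x, τ (f x) = f⁻¹ (τ x) := by
        intro x
        by_cases hpx : p < x
        · have h1 : p < f x := by
            have h2 := hfm hpx
            rw [← hfp] at h2
            exact h2
          rw [hτpos hpx, hτpos h1, hrev]
        · have h1 : ¬p < f x := by
            have h2 := hfm.monotone (not_lt.mp hpx)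
            rw [← hfp] at h2
            exact not_lt.mpr h2
          rw [hτneg hpx, hτneg h1, hrev']
      exact build f τ hAinv hBanti hCcomm
    · -- case f p < p : apply core to f⁻¹
      have h1m : StrictMono ⇑f⁻¹ := inv_strictMono hfm
      have h2 : ∀ x, h (f⁻¹ x) = (f⁻¹)⁻¹ (h x) := by
        intro x
        rw [inv_inv]
        have h3 := hrev (f⁻¹ x)
        rw [perm_apply_inv_self] at h3
        rw [h3]
        simp
      have h3 : p < f⁻¹ p := by
        have := inv_strictMono hfm hfp
        rwa [perm_inv_apply_self] at this
      obtain ⟨A, B, C⟩ := core h1m hanti h2 hp h3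
      refine build f _ A B ?_
      intro x
      have h4 := C (f x)
      rw [perm_inv_apply_self, inv_inv] at h4
      rw [h4]
      simp
end
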